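/- arXiv:2402.00383 — 4 statements merged into one kernel-verified Lean document; each statement's English description precedes it below -/
import Mathlib

section
/- Let G = ⟨a⟩ × ⟨b⟩ be free abelian of rank two and A a Schur ring over G with ⟨a⟩ an A-subgroup. Suppose some singleton {a^{i_0} b^{j_0}} with j_0 ≠ 0 is a basic set of A, and let D be the basic set containing b. Then either D = {b}, or D = {a^{n_0} b, b} where n_0 satisfies 2 i_0 = n_0 j_0, or D = {a^{n_1} b, a^{-n_1} b^{-1}, b, b^{-1}} where n_1 satisfies 2 i_0 = n_1 j_0. -/
set_option linter.unusedSectionVars false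
set_option maxHeartbeats 1000000
open Finset


noncomputable def simpleQuantity (F : Type*) [Field F] {G : Type*} [Group G]
    (D : Finset G) : MonoidAlgebra F G :=
  ∑ g ∈ D, MonoidAlgebra.single g 1

structure SchurRing (F G : Type*) [Field F] [Group G] where
  parts : Set (Finset G)
  parts_nonempty : ∀ D ∈ parts, D.Nonempty
  cover : ∀ g : G, ∃ D ∈ parts, g ∈ D
  eq_of_mem : ∀ D₁ ∈ parts, ∀ D₂ ∈ parts, ∀ g : G, g ∈ D₁ → g ∈ D₂ → D₁ = D₂
  one_mem : ({1} : Finset G) ∈ parts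
  inv_mem : ∀ D ∈ parts, ∃ D' ∈ parts, ∀ g : G, g ∈ D' ↔ g⁻¹ ∈ D
  mul_mem : ∀ x ∈ Submodule.span F (simpleQuantity F '' parts),
    ∀ y ∈ Submodule.span F (simpleQuantity F '' parts),
    x * y ∈ Submodule.span F (simpleQuantity F '' parts)

noncomputable def SchurRing.span {F G : Type*} [Field F] [Group G] (A : SchurRing F G) :
    Submodule F (MonoidAlgebra F G) :=
  Submodule.span F (simpleQuantity F '' A.parts)

def SchurRing.IsASet {F G : Type*} [Field F] [Group G] (A : SchurRing F G)
    (S : Set G) : Prop :=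
  ∀ D ∈ A.parts, (∃ g ∈ D, g ∈ S) → ↑D ⊆ S


/-- auxiliary simple quantity over an arbitrary semiring -/
noncomputable def sQ (R : Type*) [Semiring R] {G : Type*} [Group G] (C : Finset G) :
    MonoidAlgebra R G :=
  ∑ g ∈ C, MonoidAlgebra.single g 1

lemma sQ_apply {R : Type*} [Semiring R] {G : Type*} [Group G] [DecidableEq G]
    (C : Finset G) (g : G) :
    (sQ R C).coeff g = if g ∈ C then 1 else 0 := by
  classical
  unfold sQ
  rw [MonoidAlgebra.coeff_sum, Finset.sum_apply']
  simp only [MonoidAlgebra.coeff_single]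
  rw [Finset.sum_congr rfl (fun x _ => Finsupp.single_apply)]
  simp [Finset.sum_ite_eq' C g (fun _ => (1 : R))]

lemma simpleQuantity_eq_sQ {F : Type*} [Field F] {G : Type*} [Group G] (C : Finset G) :
    simpleQuantity F C = sQ F C := rfl

lemma MA_add_apply {R : Type*} [Semiring R] {G : Type*} [Group G]
    (x y : MonoidAlgebra R G) (g : G) : (x + y).coeff g = x.coeff g + y.coeff g := rfl

lemma MA_smul_apply {F : Type*} [Field F] {G : Type*} [Group G]
    (c : F) (x : MonoidAlgebra F G) (g : G) : (c • x).coeff g = c * x.coeff g := rfl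

section
variable {R : Type*} [Semiring R] {G : Type*} [CommGroup G] [DecidableEq G]

lemma single_mul_sQ (t : G) (E : Finset G) :
    (MonoidAlgebra.single t (1:R)) * sQ R E = sQ R (E.image (t * ·)) := by
  unfold sQ
  rw [Finset.mul_sum, Finset.sum_image (fun x _ y _ h => mul_left_cancel h)]
  exact Finset.sum_congr rfl fun x _ => by
    rw [MonoidAlgebra.single_mul_single, one_mul]

/-- number of ways to write g as a product of k elements of C -/
def cnt {G : Type*} [Group G] [DecidableEq G] (C : Finset G) : ℕ → G → ℕ
  | 0, g => if g = 1 then 1 else 0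
  | k+1, g => ∑ x ∈ C, cnt C k (g * x⁻¹)

lemma mul_sQ_apply (f : MonoidAlgebra R G) (E : Finset G) (g : G) :
    (f * sQ R E).coeff g = ∑ x ∈ E, f.coeff (g * x⁻¹) := by
  unfold sQ
  rw [Finset.mul_sum, MonoidAlgebra.coeff_sum, Finset.sum_apply']
  exact Finset.sum_congr rfl fun x _ => by
    rw [MonoidAlgebra.coeff_mul_single_apply, mul_one]

lemma sQ_pow_apply (C : Finset G) (k : ℕ) (g : G) :
    ((sQ R C) ^ k).coeff g = (cnt C k g : R) := by
  induction k generalizing g with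
  | zero =>
    simp only [pow_zero, cnt]
    rw [MonoidAlgebra.one_def]
    rw [MonoidAlgebra.coeff_single, Finsupp.single_apply]
    simp [eq_comm]
  | succ k ih =>
    rw [pow_succ, cnt, mul_sQ_apply]
    push_cast
    exact Finset.sum_congr rfl fun x _ => ih _

lemma sQ_pow_char (p : ℕ) [hp : Fact p.Prime]
    (hinj : Function.Injective (fun x : G => x ^ p)) (C : Finset G) (g : G) :
    ((cnt C p g : ZMod p)) = if g ∈ C.image (· ^ p) then 1 else 0 := by
  haveI : CharP (MonoidAlgebra (ZMod p) G) p := by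
    constructor
    intro n
    rw [MonoidAlgebra.natCast_def]
    rw [MonoidAlgebra.single_eq_zero]
    exact CharP.cast_eq_zero_iff (ZMod p) p n
  have h1 : (sQ (ZMod p) C) ^ p = sQ (ZMod p) (C.image (· ^ p)) := by
    unfold sQ
    rw [sum_pow_char, Finset.sum_image (fun x hx y hy h => hinj h)]
    exact Finset.sum_congr rfl fun x _ => by rw [MonoidAlgebra.single_pow, one_pow]
  have h2 := sQ_pow_apply (R := ZMod p) C p g
  rw [h1] at h2
  rw [← h2]
  unfold sQ
  rw [MonoidAlgebra.coeff_sum, Finset.sum_apply']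
  simp only [MonoidAlgebra.coeff_single]
  rw [Finset.sum_congr rfl (fun x _ => Finsupp.single_apply)]
  simp [Finset.sum_ite_eq' _ g (fun _ => (1 : ZMod p))]


end

namespace SchurRing

variable {F : Type*} [Field F] {G : Type*} [CommGroup G] [DecidableEq G] (A : SchurRing F G)

/-- the block containing g -/
noncomputable def blk (g : G) : Finset G := (A.cover g).choose

lemma blk_mem (g : G) : A.blk g ∈ A.parts := (A.cover g).choose_spec.1

lemma mem_blk (g : G) : g ∈ A.blk g := (A.cover g).choose_spec.2

lemma blk_eq {E : Finset G} (hE : E ∈ A.parts) {g : G} (hg : g ∈ E) : E = A.blk g :=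
  A.eq_of_mem E hE _ (A.blk_mem g) g hg (A.mem_blk g)

lemma blk_eq_blk {g h : G} (h1 : g ∈ A.blk h) : A.blk g = A.blk h :=
  (A.blk_eq (A.blk_mem h) h1).symm

lemma blk_one : A.blk (1 : G) = {1} := (A.blk_eq A.one_mem (Finset.mem_singleton_self 1)).symm

lemma sQ_mem_span {E : Finset G} (hE : E ∈ A.parts) : sQ F E ∈ A.span :=
  Submodule.subset_span ⟨E, hE, rfl⟩

/-- elements of the span are constant on parts -/
lemma span_const {x : MonoidAlgebra F G} (hx : x ∈ A.span) :
    ∀ E ∈ A.parts, ∀ g ∈ E, ∀ g' ∈ E, x.coeff g = x.coeff g' := by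
  refine Submodule.span_induction ?_ ?_ ?_ ?_ hx
  · rintro _ ⟨C, hC, rfl⟩ E hE g hg g' hg'
    rw [simpleQuantity_eq_sQ, sQ_apply, sQ_apply]
    by_cases h : g ∈ C
    · have : E = C := A.eq_of_mem E hE C hC g hg h
      subst this
      simp [h, hg']
    · by_cases h' : g' ∈ C
      · have : E = C := A.eq_of_mem E hE C hC g' hg' h'
        subst this
        exact absurd hg h
      · simp [h, h']
  · intro E _ g _ g' _; simp
  · intro x y _ _ hx hy E hE g hg g' hg'
    rw [MA_add_apply, MA_add_apply, hx E hE g hg g' hg', hy E hE g hg g' hg']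
  · intro c x _ hx E hE g hg g' hg'
    rw [MA_smul_apply, MA_smul_apply, hx E hE g hg g' hg']

lemma inv_part {E : Finset G} (hE : E ∈ A.parts) : E.image (·⁻¹) ∈ A.parts := by
  obtain ⟨E', hE', h⟩ := A.inv_mem E hE
  have he : E' = E.image (·⁻¹) := by
    ext g
    simp only [Finset.mem_image, h]
    constructor
    · intro hg; exact ⟨g⁻¹, hg, inv_inv g⟩
    · rintro ⟨y, hy, rfl⟩; simpa using hy
  rwa [he] at hE'

lemma blk_inv (g : G) : A.blk g⁻¹ = (A.blk g).image (·⁻¹) := by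
  refine (A.blk_eq (A.inv_part (A.blk_mem g)) ?_).symm
  exact Finset.mem_image_of_mem _ (A.mem_blk g)

end SchurRing

namespace SchurRing

variable {F : Type*} [Field F] [CharZero F] {G : Type*} [CommGroup G] [DecidableEq G]
  (A : SchurRing F G)

lemma single_mem_span {t : G} (ht : ({t} : Finset G) ∈ A.parts) :
    MonoidAlgebra.single t (1:F) ∈ A.span := by
  have : sQ F ({t} : Finset G) = MonoidAlgebra.single t (1:F) := by
    unfold sQ; rw [Finset.sum_singleton]
  rw [← this]; exact A.sQ_mem_span ht

/-- translation by a singleton part maps parts to parts -/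
lemma trans_part {t : G} (ht : ({t} : Finset G) ∈ A.parts)
    {E : Finset G} (hE : E ∈ A.parts) : E.image (t * ·) ∈ A.parts := by
  have key : ∀ s : G, ({s} : Finset G) ∈ A.parts → ∀ E' ∈ A.parts, ∀ d ∈ E',
      A.blk (s * d) ⊆ E'.image (s * ·) := by
    intro s hs E' hE' d hd g' hg'
    have hsp : sQ F (E'.image (s * ·)) ∈ A.span := by
      rw [← single_mul_sQ]
      exact A.mul_mem _ (A.single_mem_span hs) _ (A.sQ_mem_span hE')
    have hc := A.span_const hsp _ (A.blk_mem (s * d)) g' hg' (s * d) (A.mem_blk _)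
    rw [sQ_apply, sQ_apply] at hc
    have hmem : s * d ∈ E'.image (s * ·) := Finset.mem_image_of_mem _ hd
    rw [if_pos hmem] at hc
    by_contra hcon
    rw [if_neg hcon] at hc
    exact zero_ne_one hc
  obtain ⟨d₀, hd₀⟩ := A.parts_nonempty E hE
  have h1 : A.blk (t * d₀) ⊆ E.image (t * ·) := key t ht E hE d₀ hd₀
  have htinv : ({t⁻¹} : Finset G) ∈ A.parts := by
    have := A.inv_part ht
    rwa [Finset.image_singleton] at this
  have h2 : A.blk (t⁻¹ * (t * d₀)) ⊆ (A.blk (t * d₀)).image (t⁻¹ * ·) :=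
    key t⁻¹ htinv _ (A.blk_mem _) _ (A.mem_blk _)
  rw [inv_mul_cancel_left] at h2
  have hDblk : A.blk d₀ = E := (A.blk_eq hE hd₀).symm
  rw [hDblk] at h2
  -- h2 : E ⊆ (A.blk (t * d₀)).image (t⁻¹ * ·), so E.image (t * ·) ⊆ blk (t*d₀)
  have h3 : E.image (t * ·) ⊆ A.blk (t * d₀) := by
    intro x hx
    obtain ⟨y, hy, rfl⟩ := Finset.mem_image.mp hx
    obtain ⟨z, hz, hzy⟩ := Finset.mem_image.mp (h2 hy)
    have : t * y = z := by rw [← hzy, mul_inv_cancel_left]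
    rwa [this]
  have : E.image (t * ·) = A.blk (t * d₀) := Finset.Subset.antisymm h3 h1
  rw [this]; exact A.blk_mem _

lemma blk_mul {t : G} (ht : ({t} : Finset G) ∈ A.parts) (g : G) :
    A.blk (t * g) = (A.blk g).image (t * ·) := by
  refine (A.blk_eq (A.trans_part ht (A.blk_mem g)) ?_).symm
  exact Finset.mem_image_of_mem _ (A.mem_blk g)

lemma singleton_zpow {t : G} (ht : ({t} : Finset G) ∈ A.parts) (k : ℤ) :
    ({t ^ k} : Finset G) ∈ A.parts := by
  have hnat : ∀ n : ℕ, ({t ^ (n : ℤ)} : Finset G) ∈ A.parts := by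
    intro n
    induction n with
    | zero => simpa using A.one_mem
    | succ n ih =>
      have := A.trans_part ht ih
      rw [Finset.image_singleton] at this
      have he : t * t ^ (n : ℤ) = t ^ ((n+1 : ℕ) : ℤ) := by
        rw [← zpow_one_add]; norm_num; rw [add_comm]
      rwa [he] at this
  rcases le_or_gt 0 k with hk | hk
  · obtain ⟨n, rfl⟩ := Int.eq_ofNat_of_zero_le hk
    exact hnat n
  · obtain ⟨n, hn⟩ : ∃ n : ℕ, k = -(n:ℤ) := ⟨k.natAbs, by omega⟩
    subst hn
    have := A.inv_part (hnat n)
    rw [Finset.image_singleton] at this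
    rwa [show (t ^ (n:ℤ))⁻¹ = t ^ (-(n:ℤ)) by rw [zpow_neg]] at this

lemma sQ_pow_mem_span {C : Finset G} (hC : C ∈ A.parts) (k : ℕ) (hk : k ≠ 0) :
    (sQ F C) ^ k ∈ A.span := by
  induction k with
  | zero => omega
  | succ k ih =>
    rcases Nat.eq_zero_or_pos k with h | h
    · subst h; simpa using A.sQ_mem_span hC
    · rw [pow_succ]
      exact A.mul_mem _ (ih (by omega)) _ (A.sQ_mem_span hC)

lemma cnt_const {C : Finset G} (hC : C ∈ A.parts) (k : ℕ) (hk : k ≠ 0)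
    {E : Finset G} (hE : E ∈ A.parts) {g g' : G} (hg : g ∈ E) (hg' : g' ∈ E) :
    cnt C k g = cnt C k g' := by
  have := A.span_const (A.sQ_pow_mem_span hC k hk) E hE g hg g' hg'
  rw [sQ_pow_apply, sQ_pow_apply] at this
  exact_mod_cast this

/-- prime power lemma -/
lemma blk_pow_prime {C : Finset G} (hC : C ∈ A.parts) {p : ℕ} (hp : p.Prime)
    (hinj : Function.Injective (fun x : G => x ^ p)) {g : G} (hg : g ∈ C) :
    A.blk (g ^ p) ⊆ C.image (· ^ p) := by
  haveI : Fact p.Prime := ⟨hp⟩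
  haveI : Fact (1 < p) := ⟨hp.one_lt⟩
  intro g' hg'
  have h1 : cnt C p g' = cnt C p (g ^ p) :=
    A.cnt_const hC p hp.ne_zero (A.blk_mem (g ^ p)) hg' (A.mem_blk _)
  have h2 := sQ_pow_char p hinj C g'
  have h3 := sQ_pow_char p hinj C (g ^ p)
  rw [h1, h3] at h2
  rw [if_pos (Finset.mem_image_of_mem _ hg)] at h2
  by_contra hcon
  rw [if_neg hcon] at h2
  exact one_ne_zero (α := ZMod p) h2

/-- power lemma for all positive naturals -/
lemma blk_pow_nat (hinj : ∀ n : ℕ, n ≠ 0 → Function.Injective (fun x : G => x ^ n)) :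
    ∀ n : ℕ, n ≠ 0 → ∀ C ∈ A.parts, ∀ g ∈ C, A.blk (g ^ n) ⊆ C.image (· ^ n) := by
  intro n
  induction n using Nat.strong_induction_on with
  | _ n IH =>
    intro hn C hC g hg
    rcases eq_or_ne n 1 with rfl | hn1
    · intro x hx
      rw [pow_one] at hx
      rw [← A.blk_eq hC hg] at hx
      simpa using hx
    · have h2 : 2 ≤ n := by omega
      set p := n.minFac with hp
      have hpp : p.Prime := Nat.minFac_prime hn1
      set q := n / p with hq
      have hqn : q * p = n := Nat.div_mul_cancel (Nat.minFac_dvd n)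
      have hqlt : q < n := by
        have := hpp.one_lt
        calc q = n / p := rfl
        _ < n := Nat.div_lt_self (by omega) this
      have hq0 : q ≠ 0 := by
        intro h; rw [h] at hqn; simp at hqn; omega
      have hgq : g ^ q ∈ A.blk (g ^ q) := A.mem_blk _
      have step1 : A.blk ((g ^ q) ^ p) ⊆ (A.blk (g ^ q)).image (· ^ p) :=
        A.blk_pow_prime (A.blk_mem _) hpp (hinj p hpp.ne_zero) hgq
      have step2 : A.blk (g ^ q) ⊆ C.image (· ^ q) := IH q hqlt hq0 C hC g hg
      have : (A.blk (g ^ q)).image (· ^ p) ⊆ (C.image (· ^ q)).image (· ^ p) :=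
        Finset.image_subset_image step2
      rw [Finset.image_image] at this
      have hfun : ((· ^ p) ∘ (· ^ q) : G → G) = (· ^ n) := by
        funext x; simp [← pow_mul, hqn]
      rw [hfun] at this
      have hgn : (g ^ q) ^ p = g ^ n := by rw [← pow_mul, hqn]
      rw [hgn] at step1
      exact step1.trans this

/-- power lemma, integer exponents -/
lemma blk_zpow (hinj : ∀ n : ℕ, n ≠ 0 → Function.Injective (fun x : G => x ^ n))
    {m : ℤ} (hm : m ≠ 0) {C : Finset G} (hC : C ∈ A.parts) {g : G} (hg : g ∈ C) :
    A.blk (g ^ m) ⊆ C.image (· ^ m) := by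
  rcases lt_or_gt_of_ne hm with h | h
  · set n := m.natAbs with hn
    have hmn : m = -(n : ℤ) := by omega
    have h1 : A.blk (g ^ (n:ℕ)) ⊆ C.image (· ^ (n:ℕ)) :=
      A.blk_pow_nat hinj n (by omega) C hC g hg
    have h2 : A.blk ((g ^ (n:ℕ))⁻¹) = (A.blk (g ^ (n:ℕ))).image (·⁻¹) := A.blk_inv _
    have h3 : A.blk (g ^ m) ⊆ (C.image (· ^ (n:ℕ))).image (·⁻¹) := by
      rw [hmn, show g ^ (-(n:ℤ)) = (g ^ (n:ℕ))⁻¹ by rw [zpow_neg, zpow_natCast]]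
      rw [h2]
      exact Finset.image_subset_image h1
    rw [Finset.image_image] at h3
    have : ((·⁻¹) ∘ (· ^ (n:ℕ)) : G → G) = (· ^ m) := by
      funext x
      simp only [Function.comp_apply, hmn]
      rw [zpow_neg, zpow_natCast]
    rwa [this] at h3
  · set n := m.toNat with hn
    have hmn : m = (n : ℤ) := by omega
    have h1 := A.blk_pow_nat hinj n (by omega) C hC g hg
    have he : (· ^ (n:ℕ) : G → G) = (· ^ m) := by
      funext x; rw [hmn, zpow_natCast]
    rw [he] at h1
    rwa [show g ^ (n:ℕ) = g ^ m by rw [hmn, zpow_natCast]] at h1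

end SchurRing
/-- the division trick over ℤ -/
lemma div_trick (cls : ℤ → Finset ℤ)
    (hmem : ∀ n, n ∈ cls n)
    (heq : ∀ m n, m ∈ cls n → cls m = cls n)
    (hzero : cls 0 = {0})
    (hpow : ∀ m : ℤ, m ≠ 0 → ∀ n, cls (m * n) ⊆ (cls n).image (m * ·)) :
    ∀ n, cls n ⊆ ({n, -n} : Finset ℤ) := by
  have hC : cls 1 ⊆ ({1, -1} : Finset ℤ) := by
    have key : ∀ u ∈ cls 1, u ≠ 0 := by
      intro u hu hu0
      rw [hu0] at hu
      have : cls 0 = cls 1 := heq 0 1 hu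
      rw [hzero] at this
      have : (1:ℤ) ∈ ({0} : Finset ℤ) := this ▸ hmem 1
      simp at this
    intro u hu
    have hu0 : u ≠ 0 := key u hu
    have h1 : cls u ⊆ (cls 1).image (u * ·) := by
      have := hpow u hu0 1
      rwa [mul_one] at this
    have h2 : cls 1 ⊆ (cls 1).image (u * ·) := by rw [heq u 1 hu] at h1; exact h1
    have hcard : ((cls 1).image (u * ·)).card = (cls 1).card :=
      Finset.card_image_of_injective _ (mul_right_injective₀ hu0)
    have heqset : cls 1 = (cls 1).image (u * ·) :=
      Finset.eq_of_subset_of_card_le h2 (le_of_eq hcard)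
    have h1mem : (1:ℤ) ∈ (cls 1).image (u * ·) := heqset ▸ hmem 1
    obtain ⟨v, hv, hv1⟩ := Finset.mem_image.mp h1mem
    have := Int.isUnit_iff.mp (IsUnit.of_mul_eq_one v hv1)
    rcases this with h | h <;> simp [h]
  intro n x hx
  rcases eq_or_ne n 0 with rfl | hn
  · rw [hzero] at hx; simp at hx; simp [hx]
  · have h1 : cls n ⊆ (cls 1).image (n * ·) := by
      have := hpow n hn 1
      rwa [mul_one] at this
    obtain ⟨v, hv, hvx⟩ := Finset.mem_image.mp (h1 hx)
    have := hC hv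
    simp only [Finset.mem_insert, Finset.mem_singleton] at this ⊢
    rcases this with h | h <;> subst h <;> omega

namespace SchurRing

variable {F : Type*} [Field F] [CharZero F] {G : Type*} [CommGroup G] [DecidableEq G]
  (A : SchurRing F G)

/-- Z' for cyclic A-subgroups: blocks of elements of a cyclic block-union subgroup
are symmetric pairs or singletons -/
lemma blk_cyclic (hinj : ∀ n : ℕ, n ≠ 0 → Function.Injective (fun x : G => x ^ n))
    {e : G} (he : ∀ k : ℤ, e ^ k = 1 → k = 0)
    (hAe : ∀ E ∈ A.parts, (∃ k : ℤ, e ^ k ∈ E) → ∀ x ∈ E, ∃ j : ℤ, x = e ^ j) :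
    ∀ n : ℤ, A.blk (e ^ n) ⊆ ({e ^ n, e ^ (-n)} : Finset G) := by
  classical
  have hepow : ∀ a b : ℤ, e ^ a = e ^ b → a = b := by
    intro a b hab
    have : e ^ (a - b) = 1 := by
      rw [sub_eq_add_neg, zpow_add, zpow_neg, hab, mul_inv_cancel]
    have := he _ this
    omega
  set lg : G → ℤ := fun x => if h : ∃ j : ℤ, x = e ^ j then h.choose else 0 with hlg
  have lg_spec : ∀ j : ℤ, lg (e ^ j) = j := by
    intro j
    have h : ∃ j' : ℤ, e ^ j = e ^ j' := ⟨j, rfl⟩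
    simp only [hlg, dif_pos h]
    exact (hepow _ _ h.choose_spec).symm
  set cls : ℤ → Finset ℤ := fun n => (A.blk (e ^ n)).image lg with hcls
  have hblksub : ∀ n : ℤ, ∀ x ∈ A.blk (e ^ n), ∃ j : ℤ, x = e ^ j := by
    intro n x hx
    exact hAe _ (A.blk_mem _) ⟨n, A.mem_blk _⟩ x hx
  have hmem : ∀ n, n ∈ cls n := by
    intro n
    rw [hcls]
    have := Finset.mem_image_of_mem lg (A.mem_blk (e ^ n))
    rwa [lg_spec] at this
  have heqc : ∀ m n, m ∈ cls n → cls m = cls n := by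
    intro m n hm
    simp only [hcls, Finset.mem_image] at hm
    obtain ⟨x, hx, hxm⟩ := hm
    obtain ⟨j, rfl⟩ := hblksub n x hx
    rw [lg_spec] at hxm
    subst hxm
    simp only [hcls]
    rw [A.blk_eq_blk hx]
  have hzero : cls 0 = {0} := by
    simp only [hcls]
    rw [zpow_zero, A.blk_one]
    rw [Finset.image_singleton]
    have : lg 1 = 0 := by
      have := lg_spec 0
      rwa [zpow_zero] at this
    rw [this]
  have hpow : ∀ m : ℤ, m ≠ 0 → ∀ n, cls (m * n) ⊆ (cls n).image (m * ·) := by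
    intro m hm n x hx
    simp only [hcls, Finset.mem_image] at hx
    obtain ⟨y, hy, hyx⟩ := hx
    have hz : e ^ (m * n) = (e ^ n) ^ m := by rw [← zpow_mul, mul_comm]
    rw [hz] at hy
    have := A.blk_zpow hinj hm (A.blk_mem (e ^ n)) (A.mem_blk (e ^ n)) hy
    obtain ⟨z, hz2, rfl⟩ := Finset.mem_image.mp this
    obtain ⟨j, rfl⟩ := hblksub n z hz2
    rw [← zpow_mul] at hyx
    rw [lg_spec] at hyx
    subst hyx
    rw [mul_comm j m]
    apply Finset.mem_image_of_mem
    have := Finset.mem_image_of_mem lg hz2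
    rwa [lg_spec] at this
  have := div_trick cls hmem heqc hzero hpow
  intro n x hx
  obtain ⟨j, rfl⟩ := hblksub n x hx
  have hj : j ∈ cls n := by
    have := Finset.mem_image_of_mem lg hx
    rwa [lg_spec] at this
  have := this n hj
  simp only [Finset.mem_insert, Finset.mem_singleton] at this ⊢
  rcases this with h | h <;> subst h <;> simp

end SchurRing
/-- The free abelian group of rank two, written multiplicatively. -/
abbrev Z2 := Multiplicative (ℤ × ℤ)

/-- The first generator `a` of `Z × Z`. -/
def ga : Z2 := Multiplicative.ofAdd (1, 0)

/-- The second generator `b` of `Z × Z`. -/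
def gb : Z2 := Multiplicative.ofAdd (0, 1)


def pt (x y : ℤ) : Z2 := Multiplicative.ofAdd (x, y)
def xc (g : Z2) : ℤ := (Multiplicative.toAdd g).1
def yc (g : Z2) : ℤ := (Multiplicative.toAdd g).2

@[simp] lemma xc_pt (x y : ℤ) : xc (pt x y) = x := rfl
@[simp] lemma yc_pt (x y : ℤ) : yc (pt x y) = y := rfl
@[simp] lemma pt_xc_yc (g : Z2) : pt (xc g) (yc g) = g := rfl
lemma pt_mul (a b c d : ℤ) : pt a b * pt c d = pt (a+c) (b+d) := rfl
lemma xc_mul (g h : Z2) : xc (g * h) = xc g + xc h := rfl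
lemma yc_mul (g h : Z2) : yc (g * h) = yc g + yc h := rfl
lemma xc_inv (g : Z2) : xc g⁻¹ = -(xc g) := rfl
lemma yc_inv (g : Z2) : yc g⁻¹ = -(yc g) := rfl
lemma pt_one : pt 0 0 = 1 := rfl
@[simp] lemma xc_one : xc 1 = 0 := rfl
@[simp] lemma yc_one : yc 1 = 0 := rfl

lemma pt_inj {a b c d : ℤ} (h : pt a b = pt c d) : a = c ∧ b = d := by
  constructor
  · exact congrArg xc h
  · exact congrArg yc h

lemma pt_eq_iff {a b c d : ℤ} : pt a b = pt c d ↔ a = c ∧ b = d :=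
  ⟨pt_inj, by rintro ⟨rfl, rfl⟩; rfl⟩

lemma Z2_eq_iff {g h : Z2} : g = h ↔ xc g = xc h ∧ yc g = yc h := by
  constructor
  · rintro rfl; exact ⟨rfl, rfl⟩
  · rintro ⟨h1, h2⟩
    have := pt_eq_iff.mpr ⟨h1, h2⟩
    simpa using this

lemma pt_zpow (a b k : ℤ) : (pt a b) ^ k = pt (k*a) (k*b) := by
  apply Z2_eq_iff.mpr
  constructor
  · show (Multiplicative.toAdd ((pt a b) ^ k)).1 = k * a
    rw [toAdd_zpow]
    show (k • ((a : ℤ), (b : ℤ))).1 = k * a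
    simp
  · show (Multiplicative.toAdd ((pt a b) ^ k)).2 = k * b
    rw [toAdd_zpow]
    show (k • ((a : ℤ), (b : ℤ))).2 = k * b
    simp

lemma pt_pow (a b : ℤ) (n : ℕ) : (pt a b) ^ n = pt (n*a) (n*b) := by
  have := pt_zpow a b n
  rw [zpow_natCast] at this
  exact this

lemma xc_zpow (g : Z2) (k : ℤ) : xc (g ^ k) = k * xc g := by
  have := pt_zpow (xc g) (yc g) k
  rw [pt_xc_yc] at this
  rw [this]; simp

lemma yc_zpow (g : Z2) (k : ℤ) : yc (g ^ k) = k * yc g := by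
  have := pt_zpow (xc g) (yc g) k
  rw [pt_xc_yc] at this
  rw [this]; simp

lemma hinj2 : ∀ n : ℕ, n ≠ 0 → Function.Injective (fun x : Z2 => x ^ n) := by
  intro n hn x y h
  simp only at h
  have hx := congrArg xc h
  have hy := congrArg yc h
  have e1 : ∀ z : Z2, xc (z ^ n) = (n:ℤ) * xc z := fun z => by
    rw [← zpow_natCast, xc_zpow]
  have e2 : ∀ z : Z2, yc (z ^ n) = (n:ℤ) * yc z := fun z => by
    rw [← zpow_natCast, yc_zpow]
  rw [e1, e1] at hx
  rw [e2, e2] at hy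
  have hn' : (n:ℤ) ≠ 0 := Int.natCast_ne_zero.mpr hn
  apply Z2_eq_iff.mpr
  exact ⟨mul_left_cancel₀ hn' hx, mul_left_cancel₀ hn' hy⟩

lemma ga_pt : ga = pt 1 0 := rfl
lemma gb_pt : gb = pt 0 1 := rfl

lemma ga_zpow (k : ℤ) : ga ^ k = pt k 0 := by rw [ga_pt, pt_zpow]; simp
lemma gb_zpow (k : ℤ) : gb ^ k = pt 0 k := by rw [gb_pt, pt_zpow]; simp

lemma gagb (i j : ℤ) : ga ^ i * gb ^ j = pt i j := by
  rw [ga_zpow, gb_zpow, pt_mul]; simp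

/-- a finite set invariant under translation has trivial translation -/
lemma transFix {t : Z2} {E : Finset Z2} (hne : E.Nonempty)
    (h : E.image (t * ·) = E) : t = 1 := by
  classical
  have hs : ∑ u ∈ E.image (t * ·), xc u = ∑ u ∈ E, xc u := by rw [h]
  have hs2 : ∑ u ∈ E.image (t * ·), yc u = ∑ u ∈ E, yc u := by rw [h]
  rw [Finset.sum_image (fun a _ b _ hh => mul_left_cancel hh)] at hs hs2
  simp only [xc_mul, yc_mul, Finset.sum_add_distrib, Finset.sum_const, smul_eq_mul, nsmul_eq_mul] at hs hs2
  have hc : (E.card : ℤ) ≠ 0 := Int.natCast_ne_zero.mpr (Finset.card_ne_zero_of_mem hne.choose_spec)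
  have h1 : xc t = 0 := by
    have : (E.card : ℤ) * xc t = 0 := by linarith
    exact (mul_eq_zero.mp this).resolve_left hc
  have h2 : yc t = 0 := by
    have : (E.card : ℤ) * yc t = 0 := by linarith
    exact (mul_eq_zero.mp this).resolve_left hc
  apply Z2_eq_iff.mpr
  simp [h1, h2]
lemma pt_inv (a b : ℤ) : (pt a b)⁻¹ = pt (-a) (-b) := rfl

lemma mem_image_mul_iff {t : Z2} {E : Finset Z2} {w : Z2} :
    w ∈ E.image (t * ·) ↔ t⁻¹ * w ∈ E := by
  constructor
  · intro h
    obtain ⟨y, hy, rfl⟩ := Finset.mem_image.mp h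
    rwa [inv_mul_cancel_left]
  · intro h
    exact Finset.mem_image.mpr ⟨t⁻¹ * w, h, by rw [mul_inv_cancel_left]⟩

namespace SchurRing

variable {F : Type*} [Field F] [CharZero F] (A : SchurRing F Z2)

/-- the matching lemma: in presence of symmetric horizontal pairs, a part having two
elements on the same level with difference d is perfectly matched with gap d -/
lemma mdeg (hLZ : ∀ n : ℤ, A.blk (pt n 0) ⊆ {pt n 0, pt (-n) 0})
    (hclash : ∀ y : ℤ, y ≠ 0 → pt (-y) 0 ∈ A.blk (pt y 0))
    {E : Finset Z2} (hE : E ∈ A.parts) {u v : Z2}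
    (hu : u ∈ E) (hv : v ∈ E) (hyuv : yc u = yc v) (hne : u ≠ v) {w : Z2} (hw : w ∈ E) :
    (pt (xc u - xc v) 0 * w ∈ E ∧ ¬ pt (xc v - xc u) 0 * w ∈ E) ∨
    (¬ pt (xc u - xc v) 0 * w ∈ E ∧ pt (xc v - xc u) 0 * w ∈ E) := by
  classical
  set d := xc u - xc v with hd
  have hd0 : d ≠ 0 := by
    intro h
    apply hne
    apply Z2_eq_iff.mpr
    constructor
    · omega
    · exact hyuv
  have hPeq : A.blk (pt d 0) = ({pt d 0, pt (-d) 0} : Finset Z2) := by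
    apply Finset.Subset.antisymm
    · exact hLZ d
    · intro z hz
      simp only [Finset.mem_insert, Finset.mem_singleton] at hz
      rcases hz with rfl | rfl
      · exact A.mem_blk _
      · exact hclash d hd0
  have hpq : pt d 0 ≠ pt (-d) 0 := by
    intro h
    have := (pt_inj h).1
    omega
  set f := sQ F (A.blk (pt d 0)) * sQ F E with hf
  have hfspan : f ∈ A.span :=
    A.mul_mem _ (A.sQ_mem_span (A.blk_mem _)) _ (A.sQ_mem_span hE)
  have hfeq : f = sQ F (E.image (pt d 0 * ·)) + sQ F (E.image (pt (-d) 0 * ·)) := by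
    rw [hf, hPeq]
    have : sQ F ({pt d 0, pt (-d) 0} : Finset Z2)
        = MonoidAlgebra.single (pt d 0) 1 + MonoidAlgebra.single (pt (-d) 0) 1 := by
      unfold sQ
      exact Finset.sum_pair hpq
    rw [this, add_mul, single_mul_sQ, single_mul_sQ]
  have hval : ∀ z : Z2, f.coeff z =
      (if pt (-d) 0 * z ∈ E then (1:F) else 0) + (if pt d 0 * z ∈ E then (1:F) else 0) := by
    intro z
    rw [hfeq, MA_add_apply, sQ_apply, sQ_apply]
    congr 1
    · congr 1
      rw [eq_iff_iff]
      rw [mem_image_mul_iff, pt_inv]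
      simp
    · congr 1
      rw [eq_iff_iff]
      rw [mem_image_mul_iff, pt_inv]
      simp
  -- value at u is at least 1 : pt (-d) 0 * u = v ∈ E
  have huv : pt (-d) 0 * u = v := by
    apply Z2_eq_iff.mpr
    rw [xc_mul, yc_mul]
    constructor
    · simp only [xc_pt]; omega
    · simp only [yc_pt]; omega
  -- maximal element
  obtain ⟨wm, hwm, hmax⟩ := E.exists_max_image xc ⟨u, hu⟩
  have hle : ∀ z ∈ E, xc z ≤ xc wm := fun z hz => hmax z hz
  have hwmval : f.coeff wm = 0 ∨ f.coeff wm = 1 := by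
    rw [hval wm]
    rcases lt_or_gt_of_ne hd0 with hdneg | hdpos
    · -- d < 0 : pt (-d) 0 * wm has xc = xc wm - d > xc wm, not in E
      have hnot : pt (-d) 0 * wm ∉ E := by
        intro hmem
        have := hle _ hmem
        rw [xc_mul, xc_pt] at this
        omega
      rw [if_neg hnot]
      by_cases h2 : pt d 0 * wm ∈ E
      · rw [if_pos h2]; right; ring
      · rw [if_neg h2]; left; ring
    · have hnot : pt d 0 * wm ∉ E := by
        intro hmem
        have := hle _ hmem
        rw [xc_mul, xc_pt] at this
        omega
      rw [if_neg hnot]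
      by_cases h2 : pt (-d) 0 * wm ∈ E
      · rw [if_pos h2]; right; ring
      · rw [if_neg h2]; left; ring
  have hconst := A.span_const hfspan E hE
  have hfu : f.coeff u = f.coeff wm := hconst u hu wm hwm
  have hfw : f.coeff w = f.coeff wm := hconst w hw wm hwm
  have hfu1 : f.coeff u = 1 := by
    rcases hwmval with h0 | h1
    · exfalso
      have hz : f.coeff u = 0 := hfu.trans h0
      rw [hval u, huv, if_pos hv] at hz
      by_cases h2 : pt d 0 * u ∈ E
      · rw [if_pos h2] at hz; norm_num at hz
      · rw [if_neg h2] at hz; norm_num at hz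
    · exact hfu.trans h1
  have hfw1 : f.coeff w = 1 := hfw.trans (hfu.symm.trans hfu1)
  rw [hval w] at hfw1
  by_cases h1 : pt d 0 * w ∈ E <;> by_cases h2 : pt (-d) 0 * w ∈ E
  · rw [if_pos h1, if_pos h2] at hfw1; norm_num at hfw1
  · left
    constructor
    · exact h1
    · intro hcon
      rw [show xc v - xc u = -d by omega] at hcon
      exact h2 hcon
  · right
    constructor
    · exact h1
    · rw [show xc v - xc u = -d by omega]
      exact h2
  · rw [if_neg h1, if_neg h2] at hfw1; norm_num at hfw1

end SchurRing
/-- If some singleton `{a^{i₀} b^{j₀}}` with `j₀ ≠ 0` is a basic set, the basic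
set containing `b` takes one of three shapes. -/
theorem basic_set_containing_b_of_singleton {F : Type*} [Field F] [CharZero F]
    (A : SchurRing F Z2) (ha : A.IsASet ↑(Subgroup.zpowers ga))
    (i₀ j₀ : ℤ) (hj₀ : j₀ ≠ 0)
    (hsingle : ({ga ^ i₀ * gb ^ j₀} : Finset Z2) ∈ A.parts)
    (D : Finset Z2) (hD : D ∈ A.parts) (hbD : gb ∈ D) :
    D = {gb} ∨
    (∃ n₀ : ℤ, 2 * i₀ = n₀ * j₀ ∧ D = {ga ^ n₀ * gb, gb}) ∨
    (∃ n₁ : ℤ, 2 * i₀ = n₁ * j₀ ∧ D = {ga ^ n₁ * gb, ga ^ (-n₁) * gb⁻¹, gb, gb⁻¹}) := by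
  classical
  set c : Z2 := ga ^ i₀ * gb ^ j₀ with hc
  have hcpt : c = pt i₀ j₀ := gagb i₀ j₀
  have hAga : ∀ E ∈ A.parts, (∃ k : ℤ, ga ^ k ∈ E) → ∀ x ∈ E, ∃ j : ℤ, x = ga ^ j := by
    rintro E hE ⟨k, hk⟩ x hx
    have hmem : (ga ^ k : Z2) ∈ (↑(Subgroup.zpowers ga) : Set Z2) :=
      Subgroup.zpow_mem (Subgroup.zpowers ga) (Subgroup.mem_zpowers ga) k
    have hsub := ha E hE ⟨ga ^ k, hk, hmem⟩ hx
    obtain ⟨j, hj⟩ := Subgroup.mem_zpowers_iff.mp hsub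
    exact ⟨j, hj.symm⟩
  have heGa : ∀ k : ℤ, ga ^ k = 1 → k = 0 := by
    intro k h
    have := congrArg xc h
    rw [ga_zpow] at this
    simpa using this
  have hLZ : ∀ n : ℤ, A.blk (pt n 0) ⊆ ({pt n 0, pt (-n) 0} : Finset Z2) := by
    intro n
    have := A.blk_cyclic hinj2 heGa hAga n
    rw [ga_zpow, ga_zpow] at this
    exact this
  have hDblk : D = A.blk gb := A.blk_eq hD hbD
  have hgbpt : gb = pt 0 1 := rfl
  by_cases hP : ∃ x : ℤ, x ≠ 0 ∧ pt (-x) 0 ∈ A.blk (pt x 0)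
  · -- CASE II : symmetric pairs on the horizontal axis
    obtain ⟨x₀, hx₀, hx₀p⟩ := hP
    -- all nonzero horizontal blocks are symmetric pairs
    have clash : ∀ y : ℤ, y ≠ 0 → pt (-y) 0 ∈ A.blk (pt y 0) := by
      intro y hy
      by_contra hcon
      have hsing : A.blk (pt y 0) = {pt y 0} := by
        apply Finset.Subset.antisymm
        · intro z hz
          have h2 := hLZ y hz
          simp only [Finset.mem_insert, Finset.mem_singleton] at h2 ⊢
          rcases h2 with rfl | rfl
          · rfl
          · exact absurd hz hcon
        · intro z hz
          simp only [Finset.mem_singleton] at hz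
          subst hz
          exact A.mem_blk _
      have hypart : ({pt y 0} : Finset Z2) ∈ A.parts := hsing ▸ A.blk_mem _
      have h1 : A.blk (pt y 0 * pt x₀ 0) = (A.blk (pt x₀ 0)).image (pt y 0 * ·) :=
        A.blk_mul hypart _
      have h2 : pt y 0 * pt (-x₀) 0 ∈ A.blk (pt y 0 * pt x₀ 0) := by
        rw [h1]
        exact Finset.mem_image_of_mem _ hx₀p
      rw [pt_mul, pt_mul] at h2
      have h3 := hLZ (y + x₀) (by simpa using h2)
      simp only [Finset.mem_insert, Finset.mem_singleton, pt_eq_iff] at h3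
      omega
    -- the reflection lemma
    have hrefl : ∀ E ∈ A.parts, ∀ u ∈ E, j₀ * xc u = i₀ * yc u ∨
        (j₀ ∣ 2 * (i₀ * yc u) ∧ pt (2 * (i₀ * yc u) / j₀ - xc u) (yc u) ∈ E) := by
      intro E hE u hu
      rcases eq_or_ne (j₀ * xc u - yc u * i₀) 0 with h0 | hne
      · left
        linear_combination h0
      · right
        set lam : ℤ := j₀ * xc u - yc u * i₀ with hlam
        have hupow : u ^ j₀ = c ^ (yc u) * pt lam 0 := by
          rw [hcpt, pt_zpow]
          conv_lhs => rw [← pt_xc_yc u, pt_zpow]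
          rw [pt_mul, pt_eq_iff]
          constructor
          · rw [hlam]; ring
          · rw [add_zero]; ring
        have hcn : ({c ^ (yc u)} : Finset Z2) ∈ A.parts := A.singleton_zpow hsingle (yc u)
        have hblk1 : A.blk (u ^ j₀) = (A.blk (pt lam 0)).image (c ^ (yc u) * ·) := by
          rw [hupow]
          exact A.blk_mul hcn _
        have h2 : c ^ (yc u) * pt (-lam) 0 ∈ A.blk (u ^ j₀) := by
          rw [hblk1]
          exact Finset.mem_image_of_mem _ (clash lam hne)
        have h3 := A.blk_zpow hinj2 hj₀ hE hu h2
        obtain ⟨v, hv, hveq⟩ := Finset.mem_image.mp h3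
        have hve : pt (j₀ * xc v) (j₀ * yc v) = pt (yc u * i₀ - lam) (yc u * j₀) := by
          have hv2 : v ^ j₀ = pt (j₀ * xc v) (j₀ * yc v) := by
            conv_lhs => rw [← pt_xc_yc v, pt_zpow]
          rw [← hv2, hveq, hcpt, pt_zpow, pt_mul, pt_eq_iff]
          constructor
          · ring
          · ring
        obtain ⟨hx', hy'⟩ := pt_inj hve
        have hyv : yc v = yc u := by
          have h4 : j₀ * yc v = j₀ * yc u := by linear_combination hy'
          exact mul_left_cancel₀ hj₀ h4
        have key : j₀ * (xc v + xc u) = 2 * (i₀ * yc u) := by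
          linear_combination hx' - hlam
        refine ⟨⟨xc v + xc u, key.symm⟩, ?_⟩
        have hdivv : 2 * (i₀ * yc u) / j₀ = xc v + xc u := by
          rw [← key]
          exact Int.mul_ediv_cancel_left _ hj₀
        have hvv : pt (2 * (i₀ * yc u) / j₀ - xc u) (yc u) = v := by
          rw [hdivv]
          apply Z2_eq_iff.mpr
          constructor
          · simp only [xc_pt]; omega
          · simp only [yc_pt]; omega
        rw [hvv]
        exact hv
    -- normalized slope n₀
    obtain ⟨n₀, hn₀⟩ : ∃ n₀ : ℤ, n₀ * j₀ = 2 * i₀ := by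
      rcases hrefl D hD gb hbD with h | ⟨hdvd, _⟩
      · refine ⟨0, ?_⟩
        have hx0 : xc gb = 0 := rfl
        have hy1 : yc gb = 1 := rfl
        rw [hx0, hy1] at h
        omega
      · obtain ⟨z, hz⟩ := hdvd
        have hy1 : yc gb = 1 := rfl
        rw [hy1] at hz
        exact ⟨z, by linear_combination -hz⟩
    -- reflection in n₀ form
    have hrefl2 : ∀ E ∈ A.parts, ∀ u ∈ E, 2 * xc u = n₀ * yc u ∨
        pt (n₀ * yc u - xc u) (yc u) ∈ E := by
      intro E hE u hu
      rcases hrefl E hE u hu with h | ⟨_, h⟩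
      · left
        have h2 : j₀ * (2 * xc u) = j₀ * (n₀ * yc u) := by
          have e1 : j₀ * (2 * xc u) = 2 * (j₀ * xc u) := by ring
          have e2 : j₀ * (n₀ * yc u) = (n₀ * j₀) * yc u := by ring
          rw [e1, e2, hn₀, h]
          ring
        exact mul_left_cancel₀ hj₀ h2
      · right
        have hdi : 2 * (i₀ * yc u) / j₀ = n₀ * yc u := by
          have : 2 * (i₀ * yc u) = j₀ * (n₀ * yc u) := by
            linear_combination (-(yc u)) * hn₀
          rw [this]
          exact Int.mul_ediv_cancel_left _ hj₀
        rwa [hdi] at h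
    -- the axis generator e
    obtain ⟨ex, ey, kc, hey, h2e, hkc0, hceq, hall⟩ : ∃ ex ey kc : ℤ, 0 < ey ∧
        2 * ex = n₀ * ey ∧ kc ≠ 0 ∧ c = (pt ex ey) ^ kc ∧
        ∀ u : Z2, 2 * xc u = n₀ * yc u → ∃ j : ℤ, u = (pt ex ey) ^ j := by
      by_cases h2 : (2:ℤ) ∣ n₀
      · obtain ⟨m, hm⟩ := h2
        refine ⟨m, 1, j₀, one_pos, by omega, hj₀, ?_, ?_⟩
        · rw [hcpt, pt_zpow, pt_eq_iff]
          constructor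
          · have h2i : 2 * i₀ = 2 * (j₀ * m) := by linear_combination (-1:ℤ) * hn₀ + j₀ * hm
            omega
          · omega
        · intro u hu
          refine ⟨yc u, Z2_eq_iff.mpr ⟨?_, ?_⟩⟩
          · rw [pt_zpow, xc_pt]
            have h2x : 2 * xc u = 2 * (yc u * m) := by linear_combination hu + yc u * hm
            omega
          · rw [pt_zpow, yc_pt, mul_one]
      · have hj2 : (2:ℤ) ∣ j₀ := by
          have hd : (2:ℤ) ∣ n₀ * j₀ := ⟨i₀, by omega⟩
          have hd2 : ((2:ℕ):ℤ) ∣ n₀ * j₀ := by exact_mod_cast hd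
          rcases Int.Prime.dvd_mul' Nat.prime_two hd2 with h | h
          · exact absurd (by exact_mod_cast h) h2
          · exact_mod_cast h
        obtain ⟨m, hm⟩ := hj2
        have hm0 : m ≠ 0 := by omega
        refine ⟨n₀, 2, m, two_pos, by ring, hm0, ?_, ?_⟩
        · rw [hcpt, pt_zpow, pt_eq_iff]
          constructor
          · have h2i : 2 * i₀ = 2 * (m * n₀) := by linear_combination (-1:ℤ) * hn₀ + n₀ * hm
            omega
          · omega
        · intro u hu
          have hyc2 : (2:ℤ) ∣ yc u := by
            have hd : (2:ℤ) ∣ n₀ * yc u := ⟨xc u, by omega⟩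
            have hd2 : ((2:ℕ):ℤ) ∣ n₀ * yc u := by exact_mod_cast hd
            rcases Int.Prime.dvd_mul' Nat.prime_two hd2 with h | h
            · exact absurd (by exact_mod_cast h) h2
            · exact_mod_cast h
          obtain ⟨si, hs⟩ := hyc2
          refine ⟨si, Z2_eq_iff.mpr ⟨?_, ?_⟩⟩
          · rw [pt_zpow, xc_pt]
            have h2x : 2 * xc u = 2 * (si * n₀) := by linear_combination hu + n₀ * hs
            omega
          · rw [pt_zpow, yc_pt]
            omega
    set e : Z2 := pt ex ey with he
    have heE : ∀ k : ℤ, e ^ k = 1 → k = 0 := by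
      intro k h
      have := congrArg yc h
      rw [he, pt_zpow] at this
      simp only [yc_pt, yc_one] at this
      exact (mul_eq_zero.mp this).resolve_right (by omega)
    have hepow : ∀ a b : ℤ, e ^ a = e ^ b → a = b := by
      intro a b hab
      have : e ^ (a - b) = 1 := by
        rw [sub_eq_add_neg, zpow_add, zpow_neg, hab, mul_inv_cancel]
      have := heE _ this
      omega
    -- blocks containing an axis point live on the axis
    have axblocks : ∀ E ∈ A.parts, (∃ k : ℤ, e ^ k ∈ E) → ∀ u ∈ E,
        2 * xc u = n₀ * yc u := by
      rintro E hE ⟨k, hk⟩ u hu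
      set ξ : Z2 → ℤ := fun z => 2 * xc z - n₀ * yc z with hxi
      have hξe : ξ (e ^ k) = 0 := by
        simp only [hxi, he, pt_zpow, xc_pt, yc_pt]
        linear_combination k * h2e
      have hreflE : ∀ z ∈ E, ξ z = 0 ∨
          (∃ v ∈ E, yc v = yc z ∧ ξ v = -ξ z ∧ xc z - xc v = ξ z) := by
        intro z hz
        rcases hrefl2 E hE z hz with h | h
        · left; simp only [hxi]; omega
        · right
          refine ⟨pt (n₀ * yc z - xc z) (yc z), h, by simp, ?_, ?_⟩
          · simp only [hxi, xc_pt, yc_pt]; ring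
          · simp only [xc_pt]; ring
      obtain ⟨uM, huM, hMmax⟩ := E.exists_max_image ξ ⟨u, hu⟩
      have hMge : 0 ≤ ξ uM := hξe ▸ hMmax _ hk
      have hmge : ∀ z ∈ E, -ξ uM ≤ ξ z := by
        intro z hz
        rcases hreflE z hz with h0 | ⟨v, hv, _, hxiv, _⟩
        · omega
        · have := hMmax v hv
          omega
      by_cases hM0 : ξ uM = 0
      · have h1 := hMmax u hu
        have h2 := hmge u hu
        simp only [hxi] at h1 h2 hM0 ⊢
        omega
      · exfalso
        have hMpos : 0 < ξ uM := lt_of_le_of_ne hMge (Ne.symm hM0)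
        rcases hreflE uM huM with h0 | ⟨v, hv, hyv, hxiv, hxcd⟩
        · exact hM0 h0
        · have hvne : uM ≠ v := by
            intro h
            rw [← h] at hxiv
            omega
          have hmd := A.mdeg hLZ clash hE huM hv hyv.symm hvne hk
          have hxp : ∀ w : Z2, ξ (pt (xc uM - xc v) 0 * w) = 2 * ξ uM + ξ w := by
            intro w
            have hc' := hxcd
            have hy' := hyv
            simp only [hxi] at hc'
            simp only [hxi, xc_mul, yc_mul, xc_pt, yc_pt, zero_add]
            have : n₀ * yc v = n₀ * yc uM := by rw [hy']
            omega
          have hxm : ∀ w : Z2, ξ (pt (xc v - xc uM) 0 * w) = -(2 * ξ uM) + ξ w := by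
            intro w
            have hc' := hxcd
            have hy' := hyv
            simp only [hxi] at hc'
            simp only [hxi, xc_mul, yc_mul, xc_pt, yc_pt, zero_add]
            have : n₀ * yc v = n₀ * yc uM := by rw [hy']
            omega
          rcases hmd with ⟨h1, _⟩ | ⟨_, h1⟩
          · have hb := hMmax _ h1
            rw [hxp] at hb
            rw [hξe] at hb
            omega
          · have hb := hmge _ h1
            rw [hxm] at hb
            rw [hξe] at hb
            omega
    -- Z' on the axis
    have heA : ∀ E ∈ A.parts, (∃ k : ℤ, e ^ k ∈ E) → ∀ x ∈ E, ∃ j : ℤ, x = e ^ j :=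
      fun E hE hex x hx => hall x (axblocks E hE hex x hx)
    have axZ : ∀ t : ℤ, A.blk (e ^ t) ⊆ ({e ^ t, e ^ (-t)} : Finset Z2) :=
      A.blk_cyclic hinj2 heE heA
    -- all axis blocks are singletons
    have singAx : ∀ t : ℤ, A.blk (e ^ t) = {e ^ t} := by
      intro t
      apply Finset.Subset.antisymm
      · intro z hz
        have h2 := axZ t hz
        simp only [Finset.mem_insert, Finset.mem_singleton] at h2 ⊢
        rcases h2 with rfl | rfl
        · rfl
        · rcases eq_or_ne t 0 with rfl | ht
          · norm_num
          · exfalso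
            have h1 : A.blk (c * e ^ t) = (A.blk (e ^ t)).image (c * ·) :=
              A.blk_mul hsingle _
            have h2 : c * e ^ (-t) ∈ A.blk (c * e ^ t) := by
              rw [h1]
              exact Finset.mem_image_of_mem _ hz
            have e1 : c * e ^ t = e ^ (kc + t) := by rw [hceq, ← zpow_add]
            have e2 : c * e ^ (-t) = e ^ (kc - t) := by
              rw [hceq, ← zpow_add, sub_eq_add_neg]
            rw [e1, e2] at h2
            have h3 := axZ (kc + t) h2
            simp only [Finset.mem_insert, Finset.mem_singleton] at h3
            rcases h3 with h4 | h4
            · have := hepow _ _ h4; omega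
            · have := hepow _ _ h4; omega
      · intro z hz
        simp only [Finset.mem_singleton] at hz
        subst hz
        exact A.mem_blk _
    -- no two elements of D differ by a nontrivial axis element
    have clubs : ∀ t : ℤ, t ≠ 0 → ∀ u ∈ D, ∀ v ∈ D, u ≠ e ^ t * v := by
      intro t ht u hu v hv hcon
      have hp : ({e ^ t} : Finset Z2) ∈ A.parts := singAx t ▸ A.blk_mem _
      have himg : D.image (e ^ t * ·) ∈ A.parts := A.trans_part hp hD
      have heqD : D.image (e ^ t * ·) = D :=
        A.eq_of_mem _ himg D hD u (Finset.mem_image.mpr ⟨v, hv, hcon.symm⟩) hu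
      have h1 := transFix ⟨u, hu⟩ heqD
      exact ht (heE t h1)
    -- case on whether gb is on the axis (iff n₀ = 0)
    by_cases hax : n₀ = 0
    · -- gb is on the axis, so D = blk gb is a singleton
      left
      obtain ⟨j, hj⟩ := hall gb (by rw [hax]; simp; rfl)
      have h1 : D = {e ^ j} := by
        rw [hDblk, hj, singAx]
      rw [h1, ← hj]
    · -- gb is off the axis; get its mirror β' = pt n₀ 1
      have hβ'mem : pt n₀ 1 ∈ D := by
        rcases hrefl2 D hD gb hbD with h | h
        · exfalso
          have hx0 : xc gb = 0 := rfl
          have hy1 : yc gb = 1 := rfl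
          rw [hx0, hy1] at h
          omega
        · have hx0 : xc gb = 0 := rfl
          have hy1 : yc gb = 1 := rfl
          rw [hx0, hy1] at h
          simpa using h
      have hβ'ne : pt n₀ 1 ≠ gb := by
        rw [hgbpt]
        intro h
        exact hax (pt_inj h).1
      -- level extremes
      have hlvl : ∀ u ∈ D, ∃ uM um : Z2, uM ∈ D ∧ um ∈ D ∧ yc uM = yc u ∧ yc um = yc u ∧
          (∀ w ∈ D, yc w = yc u → xc um ≤ xc w ∧ xc w ≤ xc uM) := by
        intro u hu
        set S := D.filter (fun w => yc w = yc u) with hS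
        have hSne : S.Nonempty := ⟨u, Finset.mem_filter.mpr ⟨hu, rfl⟩⟩
        obtain ⟨uM, huM, hM⟩ := S.exists_max_image xc hSne
        obtain ⟨um, hum, hm⟩ := S.exists_min_image xc hSne
        simp only [hS, Finset.mem_filter] at huM hum
        refine ⟨uM, um, huM.1, hum.1, huM.2, hum.2, fun w hw hyw => ⟨?_, ?_⟩⟩
        · exact hm w (Finset.mem_filter.mpr ⟨hw, hyw⟩)
        · exact hM w (Finset.mem_filter.mpr ⟨hw, hyw⟩)
      -- no element of D is on the axis
      have haxkill : ∀ u ∈ D, 2 * xc u = n₀ * yc u → False := by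
        intro u hu haxu
        obtain ⟨j, hj⟩ := hall u haxu
        have h1 : D = {e ^ j} := by
          rw [A.blk_eq hD hu, hj, singAx]
        have hgbe : gb = u := by
          have := hbD
          rw [h1, Finset.mem_singleton] at this
          rw [this, ← hj]
        have hβe : pt n₀ 1 = u := by
          have := hβ'mem
          rw [h1, Finset.mem_singleton] at this
          rw [this, ← hj]
        exact hβ'ne (hβe.trans hgbe.symm)
      -- level-1 elements have xc ∈ {0, n₀}
      have h1lvl : ∀ w ∈ D, yc w = 1 → xc w = 0 ∨ xc w = n₀ := by
        obtain ⟨uM, um, huM, hum, hyM, hym, hbound⟩ := hlvl gb hbD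
        have hy1 : yc gb = 1 := rfl
        rw [hy1] at hyM hym hbound
        have hb0 := hbound gb hbD hy1
        have hbn := hbound _ hβ'mem (by simp)
        have hxβ : xc (pt n₀ 1) = n₀ := rfl
        have hx0 : xc gb = 0 := rfl
        rw [hxβ] at hbn
        rw [hx0] at hb0
        have hMm : uM ≠ um := by
          intro h
          rw [h] at hbound
          have h1 := hbound gb hbD hy1
          have h2 := hbound _ hβ'mem (by simp)
          rw [hx0] at h1
          rw [hxβ] at h2
          omega
        have hd0 : 0 < xc uM - xc um := by
          rcases lt_or_eq_of_le (hbound uM huM hyM).1 with h | h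
          · omega
          · exfalso
            exact hMm (Z2_eq_iff.mpr ⟨by omega, hyM.trans hym.symm⟩)
        have hxin : ∀ w ∈ D, yc w = 1 → xc w = xc um ∨ xc w = xc uM := by
          intro w hw hyw
          have hbw := hbound w hw hyw
          have hmd := A.mdeg hLZ clash hD huM hum (hyM.trans hym.symm) hMm hw
          rcases hmd with ⟨h1, _⟩ | ⟨_, h1⟩
          · have hb := hbound _ h1 (by rw [yc_mul, yc_pt, hyw]; ring)
            rw [xc_mul, xc_pt] at hb
            omega
          · have hb := hbound _ h1 (by rw [yc_mul, yc_pt, hyw]; ring)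
            rw [xc_mul, xc_pt] at hb
            omega
        intro w hw hyw
        have h1 := hxin w hw hyw
        have h2 := hxin gb hbD hy1
        have h3 := hxin _ hβ'mem (by simp)
        rw [hx0] at h2
        rw [hxβ] at h3
        omega
      -- every element of D is on level 1
      have hkill : ∀ u ∈ D, yc u = 1 := by
        intro u hu
        by_contra hn1
        obtain ⟨uM, um, huM, hum, hyM, hym, hbound⟩ := hlvl u hu
        have hreflM : pt (n₀ * yc u - xc uM) (yc u) ∈ D := by
          rcases hrefl2 D hD uM huM with h | h
          · exact absurd (by rw [hyM] at h; exact h)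
              (fun hh => haxkill uM huM (by rw [hyM]; exact hh))
          · rw [hyM] at h; exact h
        have hreflm : pt (n₀ * yc u - xc um) (yc u) ∈ D := by
          rcases hrefl2 D hD um hum with h | h
          · exact absurd (by rw [hym] at h; exact h)
              (fun hh => haxkill um hum (by rw [hym]; exact hh))
          · rw [hym] at h; exact h
        have hb1 := hbound _ hreflM (by simp)
        have hb2 := hbound _ hreflm (by simp)
        simp only [xc_pt] at hb1 hb2
        have hsum : xc uM + xc um = n₀ * yc u := by omega
        rcases eq_or_ne (xc uM) (xc um) with hMm | hMm
        · exact haxkill uM huM (by rw [hyM]; omega)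
        · have hMmne : uM ≠ um := fun h => hMm (by rw [h])
          have hmd := A.mdeg hLZ clash hD huM hum (hyM.trans hym.symm) hMmne hbD
          have hgap : xc uM - xc um = n₀ ∨ xc uM - xc um = -n₀ := by
            rcases hmd with ⟨h1, _⟩ | ⟨_, h1⟩
            · have h2 := h1lvl _ h1 (by rw [yc_mul, yc_pt]; rfl)
              rw [xc_mul, xc_pt] at h2
              have hx0 : xc gb = 0 := rfl
              omega
            · have h2 := h1lvl _ h1 (by rw [yc_mul, yc_pt]; rfl)
              rw [xc_mul, xc_pt] at h2
              have hx0 : xc gb = 0 := rfl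
              omega
          obtain ⟨q1, hq1mem, hq1⟩ : ∃ q1 : ℤ, pt q1 (yc u) ∈ D ∧
              2 * q1 = n₀ * (yc u - 1) := by
            rcases hgap with hg | hg
            · refine ⟨xc um, ?_, by linear_combination hsum - hg⟩
              have hh : pt (xc um) (yc u) = um := by
                apply Z2_eq_iff.mpr
                simp [hym]
              rwa [hh]
            · refine ⟨xc uM, ?_, by linear_combination hsum + hg⟩
              have hh : pt (xc uM) (yc u) = uM := by
                apply Z2_eq_iff.mpr
                simp [hyM]
              rwa [hh]
          obtain ⟨j, hj⟩ := hall (pt q1 (yc u - 1))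
            (by simp only [xc_pt, yc_pt]; linarith)
          have hj0 : j ≠ 0 := by
            intro h
            rw [h, zpow_zero] at hj
            have h2 := congrArg yc hj
            simp only [yc_pt, yc_one] at h2
            omega
          apply clubs j hj0 (pt q1 (yc u)) hq1mem gb hbD
          rw [← hj, hgbpt, pt_mul, pt_eq_iff]
          omega
      -- conclude D = {pt n₀ 1, gb}
      right; left
      refine ⟨n₀, by omega, ?_⟩
      have hgan : ga ^ n₀ * gb = pt n₀ 1 := by
        rw [ga_zpow, hgbpt, pt_mul]
        norm_num
      rw [hgan]
      apply Finset.Subset.antisymm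
      · intro w hw
        have hyw := hkill w hw
        rcases h1lvl w hw hyw with h | h
        · have : w = gb := by
            apply Z2_eq_iff.mpr
            rw [hgbpt]
            simp [h, hyw]
          simp [this]
        · have : w = pt n₀ 1 := by
            apply Z2_eq_iff.mpr
            simp [h, hyw]
          simp [this]
      · intro w hw
        simp only [Finset.mem_insert, Finset.mem_singleton] at hw
        rcases hw with rfl | rfl
        · exact hβ'mem
        · exact hbD

  · -- CASE I : all horizontal blocks are singletons
    push_neg at hP
    have hLS : ∀ x : ℤ, A.blk (pt x 0) = {pt x 0} := by
      intro x
      apply Finset.Subset.antisymm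
      · intro z hz
        have h2 := hLZ x hz
        simp only [Finset.mem_insert, Finset.mem_singleton] at h2 ⊢
        rcases h2 with rfl | rfl
        · rfl
        · rcases eq_or_ne x 0 with rfl | hx
          · norm_num
          · exact absurd hz (hP x hx)
      · intro z hz
        simp only [Finset.mem_singleton] at hz
        subst hz
        exact A.mem_blk _
    have hLSp : ∀ x : ℤ, ({pt x 0} : Finset Z2) ∈ A.parts := fun x => hLS x ▸ A.blk_mem _
    have hsame : ∀ E ∈ A.parts, ∀ u ∈ E, ∀ v ∈ E, yc u = yc v → u = v := by
      intro E hE u hu v hv hy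
      set t : Z2 := pt (xc u - xc v) 0 with ht
      have htu : t * v = u := by
        apply Z2_eq_iff.mpr
        rw [xc_mul, yc_mul, ht]
        constructor
        · simp only [xc_pt]; omega
        · simp only [yc_pt]; omega
      have himg : E.image (t * ·) ∈ A.parts := A.trans_part (hLSp _) hE
      have heqE : E.image (t * ·) = E :=
        A.eq_of_mem _ himg E hE u (Finset.mem_image.mpr ⟨v, hv, htu⟩) hu
      have ht1 : t = 1 := transFix ⟨u, hu⟩ heqE
      rw [ht1, one_mul] at htu
      exact htu.symm
    set cls : ℤ → Finset ℤ := fun t => (A.blk (pt 0 t)).image yc with hclsdef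
    have lvlset : ∀ g : Z2, (A.blk g).image yc = cls (yc g) := by
      intro g
      have hgg : pt 0 (yc g) = pt (-(xc g)) 0 * g := by
        apply Z2_eq_iff.mpr
        rw [xc_mul, yc_mul]
        constructor
        · simp only [xc_pt]; omega
        · simp only [yc_pt]; omega
      simp only [hclsdef]
      rw [hgg, A.blk_mul (hLSp _) g, Finset.image_image]
      congr 1
      funext z
      show yc z = yc (pt (-(xc g)) 0 * z)
      rw [yc_mul, yc_pt]
      omega
    have hmemc : ∀ t, t ∈ cls t := fun t => Finset.mem_image_of_mem yc (A.mem_blk (pt 0 t))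
    have heqcls : ∀ s t, s ∈ cls t → cls s = cls t := by
      intro s t hs
      obtain ⟨u, hu, hyu⟩ := Finset.mem_image.mp hs
      have h1 : cls s = (A.blk u).image yc := by rw [lvlset u, hyu]
      rw [h1]
      have : A.blk u = A.blk (pt 0 t) := A.blk_eq_blk hu
      rw [this]
    have hzeroc : cls 0 = {0} := by
      simp only [hclsdef]
      rw [pt_one, A.blk_one, Finset.image_singleton]
      rfl
    have hpowc : ∀ m : ℤ, m ≠ 0 → ∀ t, cls (m * t) ⊆ (cls t).image (m * ·) := by
      intro m hm t x hx
      obtain ⟨u, hu, hyu⟩ := Finset.mem_image.mp hx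
      have hzp : pt 0 (m * t) = (pt 0 t) ^ m := by rw [pt_zpow]; simp
      rw [hzp] at hu
      have h2 := A.blk_zpow hinj2 hm (A.blk_mem (pt 0 t)) (A.mem_blk (pt 0 t)) hu
      obtain ⟨z, hz, rfl⟩ := Finset.mem_image.mp h2
      refine Finset.mem_image.mpr ⟨yc z, Finset.mem_image_of_mem yc hz, ?_⟩
      rw [← hyu, yc_zpow]
    have hdiv := div_trick cls hmemc heqcls hzeroc hpowc
    have hkill : ∀ u ∈ D, yc u = 1 := by
      intro u hu
      have h1 : yc u ∈ cls 1 := by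
        rw [hDblk] at hu
        have h2 := Finset.mem_image_of_mem yc hu
        rw [lvlset gb] at h2
        exact h2
      have h2 := hdiv 1 h1
      simp only [Finset.mem_insert, Finset.mem_singleton] at h2
      rcases h2 with h | h
      · exact h
      · exfalso
        have hcu : c * u ∈ A.blk (c * gb) := by
          rw [A.blk_mul hsingle gb]
          exact Finset.mem_image.mpr ⟨u, by rw [← hDblk]; exact hu, rfl⟩
        have h3 : yc (c * u) ∈ cls (yc (c * gb)) := by
          rw [← lvlset (c * gb)]
          exact Finset.mem_image_of_mem yc hcu
        have hyc1 : yc (c * gb) = j₀ + 1 := by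
          rw [hcpt, yc_mul]
          rfl
        have hyc2 : yc (c * u) = j₀ - 1 := by
          rw [hcpt, yc_mul, yc_pt, h]
          ring
        rw [hyc1, hyc2] at h3
        have h4 := hdiv (j₀ + 1) h3
        simp only [Finset.mem_insert, Finset.mem_singleton] at h4
        omega
    left
    apply Finset.eq_singleton_iff_unique_mem.mpr
    refine ⟨hbD, fun x hx => ?_⟩
    exact hsame D hD x hx gb hbD (by rw [hkill x hx]; rfl)
end

section
/- Let G = ⟨a⟩ × ⟨b⟩ be free abelian of rank two, n a nonzero integer, and φ₂ ∈ Aut(G) with φ₂(a) = a^{-1}, φ₂(b) = a^n b. Then φ₂ has order 2, the ⟨φ₂⟩-orbit containing a^i b^j equals {a^i b^j, a^{nj-i} b^j}, and the span of the simple quantities of these orbits is a Schur ring over G. -/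
/-! ### Auxiliary definitions and lemmas -/

def phiAdd (n : ℤ) : (ℤ × ℤ) ≃+ (ℤ × ℤ) where
  toFun p := (n * p.2 - p.1, p.2)
  invFun p := (n * p.2 - p.1, p.2)
  left_inv p := by simp
  right_inv p := by simp
  map_add' p q := by simp [Prod.ext_iff]; ring

def phi (n : ℤ) : MulAut Z2 := AddEquiv.toMultiplicative (phiAdd n)

lemma phi_apply (n : ℤ) (p : ℤ × ℤ) :
    phi n (Multiplicative.ofAdd p) = Multiplicative.ofAdd (n * p.2 - p.1, p.2) := rfl

lemma pow_eq (i j : ℤ) : ga ^ i * gb ^ j = Multiplicative.ofAdd (i, j) := by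
  simp [ga, gb, ← ofAdd_zsmul, ← ofAdd_add, Prod.ext_iff]

lemma surj (x : Z2) : ∃ i j : ℤ, x = ga ^ i * gb ^ j :=
  ⟨(Multiplicative.toAdd x).1, (Multiplicative.toAdd x).2, by rw [pow_eq]; rfl⟩

lemma phi_sq (n : ℤ) : phi n ^ 2 = 1 := by
  refine MulEquiv.ext (fun p => ?_)
  show phi n (phi n (Multiplicative.ofAdd (Multiplicative.toAdd p))) = _
  rw [phi_apply, phi_apply]
  simp

lemma phi_phi (n : ℤ) (x : Z2) : phi n (phi n x) = x := by
  have := phi_sq n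
  have h : (phi n ^ 2) x = (1 : MulAut Z2) x := by rw [this]
  simpa [pow_two] using h

lemma phi_ne_one (n : ℤ) : phi n ≠ 1 := by
  intro h
  have : phi n ga = ga := by rw [h]; rfl
  rw [ga, phi_apply] at this
  have h2 := congrArg (fun x : Z2 => (Multiplicative.toAdd x).1) this
  simp at h2

lemma order_phi (n : ℤ) : orderOf (phi n) = 2 :=
  orderOf_eq_prime (phi_sq n) (phi_ne_one n)

lemma zpow_phi (n k : ℤ) : phi n ^ k = 1 ∨ phi n ^ k = phi n := by
  rcases Int.even_or_odd k with ⟨m, hm⟩ | ⟨m, hm⟩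
  · left; rw [hm, ← two_mul, zpow_mul]; norm_cast; rw [phi_sq]; simp
  · right; rw [hm, zpow_add, zpow_mul]; norm_cast; rw [phi_sq]; simp

lemma orbit_eq (n : ℤ) (x : Z2) :
    MulAction.orbit (Subgroup.zpowers (phi n)) x = {x, phi n x} := by
  ext y
  constructor
  · rintro ⟨⟨g, k, rfl⟩, rfl⟩
    rcases zpow_phi n k with h | h <;> simp [h, Subgroup.smul_def, MulAut.smul_def]
  · rintro (rfl | rfl)
    · exact ⟨⟨1, ⟨0, by simp⟩⟩, rfl⟩
    · exact ⟨⟨phi n, Subgroup.mem_zpowers _⟩, rfl⟩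

lemma phi_pow (n i j : ℤ) : phi n (ga ^ i * gb ^ j) = ga ^ (n * j - i) * gb ^ j := by
  rw [pow_eq, phi_apply, ← pow_eq]

def parts2 (n : ℤ) : Set (Finset Z2) :=
  {D : Finset Z2 | ∃ i j : ℤ, D = {ga ^ i * gb ^ j, ga ^ (n * j - i) * gb ^ j}}

lemma parts_char (n : ℤ) (D : Finset Z2) :
    D ∈ parts2 n ↔ ∃ x : Z2, D = {x, phi n x} := by
  constructor
  · rintro ⟨i, j, rfl⟩; exact ⟨ga ^ i * gb ^ j, by rw [phi_pow]⟩
  · rintro ⟨x, rfl⟩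
    obtain ⟨i, j, rfl⟩ := surj x
    exact ⟨i, j, by rw [phi_pow]⟩

lemma part_eq (n : ℤ) (x g : Z2) (hg : g ∈ ({x, phi n x} : Finset Z2)) :
    ({x, phi n x} : Finset Z2) = {g, phi n g} := by
  rcases Finset.mem_insert.1 hg with rfl | h
  · rfl
  · rw [Finset.mem_singleton] at h
    subst h
    rw [phi_phi, Finset.pair_comm]

noncomputable def tq (F : Type*) [Field F] (n : ℤ) (x : Z2) : MonoidAlgebra F Z2 :=
  MonoidAlgebra.single x 1 + MonoidAlgebra.single (phi n x) 1

lemma tq_mul (F : Type*) [Field F] (n : ℤ) (x y : Z2) :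
    tq F n x * tq F n y = tq F n (x * y) + tq F n (x * phi n y) := by
  simp only [tq, add_mul, mul_add, MonoidAlgebra.single_mul_single, one_mul, map_mul, phi_phi]
  abel

lemma span_eq (F : Type*) [Field F] [CharZero F] (n : ℤ) :
    Submodule.span F (simpleQuantity F '' parts2 n)
      = Submodule.span F (Set.range (tq F n)) := by
  apply le_antisymm
  · rw [Submodule.span_le]
    rintro _ ⟨D, hD, rfl⟩
    obtain ⟨x, rfl⟩ := (parts_char n D).1 hD
    by_cases h : phi n x = x
    · have hsq : simpleQuantity F ({x, phi n x} : Finset Z2) = MonoidAlgebra.single x 1 := by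
        rw [h]; simp [simpleQuantity]
      have htq : tq F n x = MonoidAlgebra.single x 2 := by
        rw [tq, h, ← MonoidAlgebra.single_add]; norm_num
      have : simpleQuantity F ({x, phi n x} : Finset Z2) = (2 : F)⁻¹ • tq F n x := by
        rw [hsq, htq, MonoidAlgebra.smul_single']
        norm_num
      rw [this]
      exact Submodule.smul_mem _ _ (Submodule.subset_span ⟨x, rfl⟩)
    · have : simpleQuantity F ({x, phi n x} : Finset Z2) = tq F n x := by
        rw [simpleQuantity, Finset.sum_pair (Ne.symm h)]; rfl
      rw [this]
      exact Submodule.subset_span ⟨x, rfl⟩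
  · rw [Submodule.span_le]
    rintro _ ⟨x, rfl⟩
    have hmem : ({x, phi n x} : Finset Z2) ∈ parts2 n := (parts_char n _).2 ⟨x, rfl⟩
    by_cases h : phi n x = x
    · have htq : tq F n x = (2 : F) • simpleQuantity F ({x, phi n x} : Finset Z2) := by
        rw [tq, h, ← MonoidAlgebra.single_add]
        simp only [simpleQuantity, Finset.insert_idem, Finset.sum_singleton,
          MonoidAlgebra.smul_single']
        norm_num
      rw [htq]
      exact Submodule.smul_mem _ _ (Submodule.subset_span ⟨_, hmem, rfl⟩)
    · have : tq F n x = simpleQuantity F ({x, phi n x} : Finset Z2) := by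
        rw [simpleQuantity, Finset.sum_pair (Ne.symm h)]; rfl
      rw [this]
      exact Submodule.subset_span ⟨_, hmem, rfl⟩

lemma span_mul (F : Type*) [Field F] [CharZero F] (n : ℤ) :
    ∀ x ∈ Submodule.span F (simpleQuantity F '' parts2 n),
    ∀ y ∈ Submodule.span F (simpleQuantity F '' parts2 n),
    x * y ∈ Submodule.span F (simpleQuantity F '' parts2 n) := by
  intro x hx y hy
  rw [span_eq] at hx hy ⊢
  have key : Submodule.span F (Set.range (tq F n)) * Submodule.span F (Set.range (tq F n))
      ≤ Submodule.span F (Set.range (tq F n)) := by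
    rw [Submodule.span_mul_span, Submodule.span_le]
    rintro _ ⟨_, ⟨a, rfl⟩, _, ⟨b, rfl⟩, rfl⟩
    simp only
    rw [tq_mul]
    exact add_mem (Submodule.subset_span ⟨_, rfl⟩) (Submodule.subset_span ⟨_, rfl⟩)
  exact key (Submodule.mul_mem_mul hx hy)

noncomputable def orbitSchur (F : Type*) [Field F] [CharZero F] (n : ℤ) : SchurRing F Z2 where
  parts := parts2 n
  parts_nonempty := by
    rintro D ⟨i, j, rfl⟩
    exact Finset.insert_nonempty _ _
  cover := by
    intro g
    obtain ⟨i, j, rfl⟩ := surj g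
    exact ⟨{ga ^ i * gb ^ j, ga ^ (n * j - i) * gb ^ j}, ⟨i, j, rfl⟩,
      Finset.mem_insert_self _ _⟩
  eq_of_mem := by
    intro D₁ h₁ D₂ h₂ g hg₁ hg₂
    obtain ⟨x, rfl⟩ := (parts_char n D₁).1 h₁
    obtain ⟨y, rfl⟩ := (parts_char n D₂).1 h₂
    rw [part_eq n x g hg₁, part_eq n y g hg₂]
  one_mem := by
    refine ⟨0, 0, ?_⟩
    norm_num
  inv_mem := by
    intro D hD
    obtain ⟨x, rfl⟩ := (parts_char n D).1 hD
    refine ⟨{x⁻¹, phi n x⁻¹}, (parts_char n _).2 ⟨x⁻¹, rfl⟩, ?_⟩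
    intro g
    simp only [Finset.mem_insert, Finset.mem_singleton, map_inv]
    constructor
    · rintro (rfl | rfl) <;> simp
    · rintro h
      rcases h with h | h
      · left; rw [← h]; simp
      · right; rw [← h]; simp
  mul_mem := span_mul F n

/-- The automorphism `φ₂` with `φ₂(a) = a⁻¹`, `φ₂(b) = a^n b` has order two,
orbits `{a^i b^j, a^{nj-i} b^j}`, and these yield an (orbit) Schur ring. -/
theorem orbit_schurRing_phi2 (F : Type*) [Field F] [CharZero F] (n : ℤ) (hn : n ≠ 0) :
    ∃ φ : MulAut Z2, φ ga = ga⁻¹ ∧ φ gb = ga ^ n * gb ∧ orderOf φ = 2 ∧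
      (∀ i j : ℤ, MulAction.orbit (Subgroup.zpowers φ) (ga ^ i * gb ^ j) =
        ({ga ^ i * gb ^ j, ga ^ (n * j - i) * gb ^ j} : Set Z2)) ∧
      ∃ A : SchurRing F Z2, A.parts =
        {D : Finset Z2 | ∃ i j : ℤ,
          D = {ga ^ i * gb ^ j, ga ^ (n * j - i) * gb ^ j}} := by
  refine ⟨phi n, ?_, ?_, order_phi n, ?_, orbitSchur F n, rfl⟩
  · rw [ga, phi_apply, ← ofAdd_neg]
    norm_num
  · have h := phi_pow n 0 1
    norm_num at h
    exact h
  · intro i j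
    rw [orbit_eq, phi_pow]
end

section
/- Let G = ⟨a⟩ × ⟨b⟩ be free abelian of rank two and A a Schur ring over G in which {a^i, a^{-i}} is a basic set for every nonzero i and {b, b^{-1}} is a basic set. Then for nonzero integers i, j, the set {a^i b^j, a^i b^{-j}} is not a basic set of A. -/
open Classical in
lemma simpleQuantity_apply {F G : Type*} [Field F] [Group G] (D : Finset G) (k : G) :
    (simpleQuantity F D).coeff k = if k ∈ D then 1 else 0 := by
  rw [simpleQuantity, MonoidAlgebra.coeff_sum, Finsupp.finset_sum_apply]
  simp [MonoidAlgebra.coeff_single, Finsupp.single_apply, Finset.sum_ite_eq D]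

/-- Any element of the span of a Schur ring has equal coefficients on the
elements of a single basic set. -/
lemma span_apply_eq {F G : Type*} [Field F] [Group G] (A : SchurRing F G)
    {D : Finset G} (hD : D ∈ A.parts) {g h : G} (hg : g ∈ D) (hh : h ∈ D) :
    ∀ y ∈ Submodule.span F (simpleQuantity F '' A.parts), y.coeff g = y.coeff h := by
  intro y hy
  induction hy using Submodule.span_induction with
  | mem x hx =>
    obtain ⟨D', hD', rfl⟩ := hx
    have hiff : g ∈ D' ↔ h ∈ D' := by
      constructor
      · intro h'
        have := A.eq_of_mem D hD D' hD' g hg h'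
        exact this ▸ hh
      · intro h'
        have := A.eq_of_mem D hD D' hD' h hh h'
        exact this ▸ hg
    rw [simpleQuantity_apply, simpleQuantity_apply]
    by_cases hcase : g ∈ D'
    · rw [if_pos hcase, if_pos (hiff.mp hcase)]
    · rw [if_neg hcase, if_neg (fun hc => hcase (hiff.mpr hc))]
  | zero => rfl
  | add x y hx hy ihx ihy => rw [MonoidAlgebra.coeff_add, Finsupp.add_apply, Finsupp.add_apply, ihx, ihy]
  | smul a x hx ih => rw [MonoidAlgebra.coeff_smul_apply, MonoidAlgebra.coeff_smul_apply, ih]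

lemma gagb_pow (m n : ℤ) : ga ^ m * gb ^ n = Multiplicative.ofAdd (m, n) := by
  have h1 : ga ^ m * gb ^ n
      = Multiplicative.ofAdd (m • ((1:ℤ),(0:ℤ)) + n • ((0:ℤ),(1:ℤ))) := rfl
  rw [h1]
  congr 1
  simp [Prod.ext_iff]

lemma ofAdd_inj' (p q : ℤ × ℤ) :
    (Multiplicative.ofAdd p = Multiplicative.ofAdd q) ↔ p = q :=
  Multiplicative.ofAdd.injective.eq_iff

/-- If `{a^i, a^{-i}}` (`i ≠ 0`) and `{b, b⁻¹}` are basic sets, then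
`{a^i b^j, a^i b^{-j}}` is never a basic set for nonzero `i, j`. -/
theorem not_basic_mixed {F : Type*} [Field F] [CharZero F] (A : SchurRing F Z2)
    (hai : ∀ i : ℤ, i ≠ 0 → ({ga ^ i, ga ^ (-i)} : Finset Z2) ∈ A.parts)
    (hb : ({gb, gb⁻¹} : Finset Z2) ∈ A.parts) :
    ∀ i j : ℤ, i ≠ 0 → j ≠ 0 →
      ({ga ^ i * gb ^ j, ga ^ i * gb ^ (-j)} : Finset Z2) ∉ A.parts := by
  intro i j hi hj hmem
  set u : Z2 := ga ^ i * gb ^ j with hu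
  set v : Z2 := ga ^ i * gb ^ (-j) with hv
  have huv : u ≠ v := by
    rw [hu, hv, gagb_pow, gagb_pow, Ne, ofAdd_inj', Prod.ext_iff]
    simp only [not_and]
    intro _
    omega
  set x : MonoidAlgebra F Z2 := simpleQuantity F {u, v} with hx
  have hxspan : x ∈ Submodule.span F (simpleQuantity F '' A.parts) :=
    Submodule.subset_span ⟨_, hmem, rfl⟩
  have hx2 : x * x ∈ Submodule.span F (simpleQuantity F '' A.parts) :=
    A.mul_mem x hxspan x hxspan
  have h2i : (2 * i) ≠ 0 := by omega
  have hP : ({ga ^ (2*i), ga ^ (-(2*i))} : Finset Z2) ∈ A.parts := hai (2*i) h2i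
  set g : Z2 := ga ^ (2*i) with hgdef
  set h : Z2 := ga ^ (-(2*i)) with hhdef
  have hgP : g ∈ ({g, h} : Finset Z2) := by simp
  have hhP : h ∈ ({g, h} : Finset Z2) := by simp
  have heq : (x * x).coeff g = (x * x).coeff h := span_apply_eq A hP hgP hhP _ hx2
  have hxs : x = MonoidAlgebra.single u 1 + MonoidAlgebra.single v 1 := by
    rw [hx, simpleQuantity, Finset.sum_pair huv]
  have hxx : x * x = MonoidAlgebra.single (u*u) 1 + MonoidAlgebra.single (u*v) 1
      + (MonoidAlgebra.single (v*u) 1 + MonoidAlgebra.single (v*v) 1) := by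
    rw [hxs, add_mul, mul_add, mul_add]
    simp only [MonoidAlgebra.single_mul_single, one_mul]
  have hgo : g = Multiplicative.ofAdd ((2*i : ℤ), (0 : ℤ)) := by
    rw [hgdef, show (ga:Z2) ^ (2*i) = ga ^ (2*i) * gb ^ (0:ℤ) by rw [zpow_zero, mul_one],
      gagb_pow]
  have hho : h = Multiplicative.ofAdd ((-(2*i) : ℤ), (0 : ℤ)) := by
    rw [hhdef, show (ga:Z2) ^ (-(2*i)) = ga ^ (-(2*i)) * gb ^ (0:ℤ) by rw [zpow_zero, mul_one],
      gagb_pow]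
  have huu : u * u = Multiplicative.ofAdd ((2*i : ℤ), (2*j : ℤ)) := by
    rw [hu, gagb_pow, ← ofAdd_add, ofAdd_inj', Prod.mk_add_mk, Prod.ext_iff]
    constructor <;> ring
  have hvv : v * v = Multiplicative.ofAdd ((2*i : ℤ), (-(2*j) : ℤ)) := by
    rw [hv, gagb_pow, ← ofAdd_add, ofAdd_inj', Prod.mk_add_mk, Prod.ext_iff]
    constructor <;> ring
  have huv2 : u * v = Multiplicative.ofAdd ((2*i : ℤ), (0 : ℤ)) := by
    rw [hu, hv, gagb_pow, gagb_pow, ← ofAdd_add, ofAdd_inj', Prod.mk_add_mk, Prod.ext_iff]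
    constructor <;> ring
  have hvu2 : v * u = Multiplicative.ofAdd ((2*i : ℤ), (0 : ℤ)) := by
    rw [mul_comm]; exact huv2
  have hne1 : Multiplicative.ofAdd ((2*i : ℤ), (2*j : ℤ))
      ≠ Multiplicative.ofAdd ((2*i : ℤ), (0 : ℤ)) := by
    rw [Ne, ofAdd_inj', Prod.ext_iff]; simp only [not_and]; intro _; omega
  have hne2 : Multiplicative.ofAdd ((2*i : ℤ), (-(2*j) : ℤ))
      ≠ Multiplicative.ofAdd ((2*i : ℤ), (0 : ℤ)) := by
    rw [Ne, ofAdd_inj', Prod.ext_iff]; simp only [not_and]; intro _; omega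
  have hne3 : Multiplicative.ofAdd ((2*i : ℤ), (2*j : ℤ))
      ≠ Multiplicative.ofAdd ((-(2*i) : ℤ), (0 : ℤ)) := by
    rw [Ne, ofAdd_inj', Prod.ext_iff]; simp only [not_and]; intro hh; omega
  have hne4 : Multiplicative.ofAdd ((2*i : ℤ), (-(2*j) : ℤ))
      ≠ Multiplicative.ofAdd ((-(2*i) : ℤ), (0 : ℤ)) := by
    rw [Ne, ofAdd_inj', Prod.ext_iff]; simp only [not_and]; intro hh; omega
  have hne5 : Multiplicative.ofAdd ((2*i : ℤ), (0 : ℤ))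
      ≠ Multiplicative.ofAdd ((-(2*i) : ℤ), (0 : ℤ)) := by
    rw [Ne, ofAdd_inj', Prod.ext_iff]; simp only [not_and]; intro hh; omega
  have hcg : (x * x).coeff g = 2 := by
    rw [hxx, hgo, huu, hvv, huv2, hvu2]
    simp only [MonoidAlgebra.coeff_add, MonoidAlgebra.coeff_single]
    rw [Finsupp.add_apply, Finsupp.add_apply,
      Finsupp.add_apply, Finsupp.single_eq_of_ne' hne1, Finsupp.single_eq_of_ne' hne2,
      Finsupp.single_eq_same]
    norm_num
  have hch : (x * x).coeff h = 0 := by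
    rw [hxx, hho, huu, hvv, huv2, hvu2]
    simp only [MonoidAlgebra.coeff_add, MonoidAlgebra.coeff_single]
    rw [Finsupp.add_apply, Finsupp.add_apply,
      Finsupp.add_apply, Finsupp.single_eq_of_ne' hne3, Finsupp.single_eq_of_ne' hne4,
      Finsupp.single_eq_of_ne' hne5]
    norm_num
  rw [hcg, hch] at heq
  exact two_ne_zero heq
end

section
/- Let G = ⟨a⟩ × ⟨b⟩ be free abelian of rank two and A a Schur ring over G. If there exists a nonzero integer k such that ⟨a^k⟩ is an A-subgroup, then ⟨a⟩ itself is an A-subgroup. -/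
namespace SchurAux

open MonoidAlgebra

/-- second coordinate -/
abbrev pi2 (g : Z2) : ℤ := (Multiplicative.toAdd g).2

lemma pi2_mul (g h : Z2) : pi2 (g * h) = pi2 g + pi2 h := rfl

lemma pi2_pow (g : Z2) (n : ℕ) : pi2 (g ^ n) = n * pi2 g := by
  induction n with
  | zero => simp [pi2]
  | succ n ih => rw [pow_succ, pi2_mul, ih]; push_cast; ring

lemma pow_left_inj {p : ℕ} (hp : p ≠ 0) {x y : Z2} (hxy : x ^ p = y ^ p) : x = y := by
  have h1 : Multiplicative.toAdd (x ^ p) = Multiplicative.toAdd (y ^ p) := by rw [hxy]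
  rw [toAdd_pow, toAdd_pow] at h1
  have h2 : (p : ℤ) • Multiplicative.toAdd x = (p : ℤ) • Multiplicative.toAdd y := by
    rw [natCast_zsmul, natCast_zsmul, h1]
  have hp' : (p : ℤ) ≠ 0 := Int.natCast_ne_zero.mpr hp
  have := smul_right_injective (ℤ × ℤ) hp' h2
  exact Multiplicative.toAdd.injective this

lemma toAdd_ga_zpow (n : ℤ) : Multiplicative.toAdd (ga ^ n) = (n, 0) := by
  rw [toAdd_zpow]
  simp [ga, Prod.smul_def]

lemma mem_zpowers_ga_iff {g : Z2} : g ∈ Subgroup.zpowers ga ↔ pi2 g = 0 := by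
  constructor
  · rintro ⟨n, rfl⟩
    have := toAdd_ga_zpow n
    simp only [pi2, this]
  · intro h0
    refine ⟨(Multiplicative.toAdd g).1, Multiplicative.toAdd.injective ?_⟩
    rw [toAdd_ga_zpow]
    exact Prod.ext rfl h0.symm

lemma mem_zpowers_gak_iff {k : ℤ} {g : Z2} :
    g ∈ Subgroup.zpowers (ga ^ k) ↔ pi2 g = 0 ∧ k ∣ (Multiplicative.toAdd g).1 := by
  constructor
  · rintro ⟨n, rfl⟩
    simp only
    rw [← zpow_mul]
    have := toAdd_ga_zpow (k * n)
    constructor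
    · simp only [pi2, this]
    · rw [this]; exact ⟨n, rfl⟩
  · rintro ⟨h0, c, hc⟩
    refine ⟨c, Multiplicative.toAdd.injective ?_⟩
    simp only
    rw [← zpow_mul, toAdd_ga_zpow]
    exact Prod.ext hc.symm h0.symm

end SchurAux
namespace SchurAux

open MonoidAlgebra

variable {F : Type*} [Field F] [CharZero F]

lemma simpleQuantity_apply (D : Finset Z2) (g : Z2) :
    (simpleQuantity F D).coeff g = if g ∈ D then 1 else 0 := by
  classical
  rw [simpleQuantity, MonoidAlgebra.coeff_sum, Finsupp.finset_sum_apply]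
  simp [MonoidAlgebra.coeff_single, Finsupp.single_apply]

lemma sq_mem_span (A : SchurRing F Z2) {D : Finset Z2} (hD : D ∈ A.parts) :
    simpleQuantity F D ∈ A.span :=
  Submodule.subset_span ⟨D, hD, rfl⟩

lemma coeff_const (A : SchurRing F Z2) {x : MonoidAlgebra F Z2} (hx : x ∈ A.span)
    {D : Finset Z2} (hD : D ∈ A.parts) {g₁ g₂ : Z2} (h1 : g₁ ∈ D) (h2 : g₂ ∈ D) :
    x.coeff g₁ = x.coeff g₂ := by
  induction hx using Submodule.span_induction with
  | mem x hxmem =>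
    obtain ⟨D₀, hD₀, rfl⟩ := hxmem
    rw [simpleQuantity_apply, simpleQuantity_apply]
    by_cases hg : g₁ ∈ D₀
    · have hDD : D = D₀ := A.eq_of_mem D hD D₀ hD₀ g₁ h1 hg
      rw [if_pos hg, if_pos (hDD ▸ h2)]
    · have hg2 : g₂ ∉ D₀ := fun hg2 => hg (A.eq_of_mem D hD D₀ hD₀ g₂ h2 hg2 ▸ h1)
      rw [if_neg hg, if_neg hg2]
  | zero => simp
  | add x y _ _ ihx ihy =>
    show (x + y).coeff g₁ = (x + y).coeff g₂
    rw [MonoidAlgebra.coeff_add, Finsupp.add_apply (g₁ := x.coeff), Finsupp.add_apply, ihx, ihy]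
  | smul c x _ ih =>
    show (c • x).coeff g₁ = (c • x).coeff g₂
    rw [MonoidAlgebra.coeff_smul, Finsupp.smul_apply, Finsupp.smul_apply, ih]

lemma mul_sq_apply (X Y : Finset Z2) (t : Z2) :
    (simpleQuantity F X * simpleQuantity F Y).coeff t
      = ((((X ×ˢ Y).filter (fun q => q.1 * q.2 = t)).card : ℕ) : F) := by
  classical
  rw [simpleQuantity, simpleQuantity, Finset.sum_mul_sum]
  simp_rw [MonoidAlgebra.single_mul_single, one_mul]
  rw [← Finset.sum_product']
  rw [MonoidAlgebra.coeff_sum, Finsupp.finset_sum_apply]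
  simp_rw [MonoidAlgebra.coeff_single, Finsupp.single_apply]
  rw [Finset.sum_boole]

/-- product of two parts is a union of parts -/
lemma part_subset_mul (A : SchurRing F Z2) {X Y D : Finset Z2}
    (hX : X ∈ A.parts) (hY : Y ∈ A.parts) (hD : D ∈ A.parts) {x₀ y₀ : Z2}
    (hx₀ : x₀ ∈ X) (hy₀ : y₀ ∈ Y) (hxy : x₀ * y₀ ∈ D) :
    ∀ d ∈ D, ∃ a ∈ X, ∃ b ∈ Y, a * b = d := by
  classical
  intro d hd
  have hspan : simpleQuantity F X * simpleQuantity F Y ∈ A.span :=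
    A.mul_mem _ (sq_mem_span A hX) _ (sq_mem_span A hY)
  have hco := coeff_const A hspan hD hd hxy
  rw [mul_sq_apply, mul_sq_apply] at hco
  have hne : (((X ×ˢ Y).filter (fun q => q.1 * q.2 = x₀ * y₀)).card : F) ≠ 0 := by
    rw [Nat.cast_ne_zero, ← Nat.pos_iff_ne_zero, Finset.card_pos]
    exact ⟨(x₀, y₀), by simp [Finset.mem_filter, Finset.mem_product, hx₀, hy₀]⟩
  rw [← hco] at hne
  rw [Nat.cast_ne_zero, ← Nat.pos_iff_ne_zero, Finset.card_pos] at hne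
  obtain ⟨⟨a, b⟩, hab⟩ := hne
  simp only [Finset.mem_filter, Finset.mem_product] at hab
  exact ⟨a, hab.1.1, b, hab.1.2, hab.2⟩

end SchurAux

namespace SchurAux

open MonoidAlgebra

/-- coefficient-cast ring hom `ℤ[Z2] → S[Z2]` -/
noncomputable def mapC (S : Type*) [CommRing S] : MonoidAlgebra ℤ Z2 →+* MonoidAlgebra S Z2 :=
  MonoidAlgebra.liftNCRingHom
    ((MonoidAlgebra.singleOneRingHom).comp (Int.castRingHom S))
    (MonoidAlgebra.of S Z2) (fun _ _ => Commute.all _ _)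

lemma mapC_single (S : Type*) [CommRing S] (a : Z2) (b : ℤ) :
    mapC S (MonoidAlgebra.single a b) = MonoidAlgebra.single a (b : S) := by
  rw [mapC, MonoidAlgebra.liftNCRingHom]
  show MonoidAlgebra.liftNC _ _ (MonoidAlgebra.single a b) = _
  rw [MonoidAlgebra.liftNC_single]
  simp only [RingHom.coe_comp, RingHom.toAddMonoidHom_eq_coe, AddMonoidHom.coe_coe,
    Function.comp_apply, Int.coe_castRingHom, MonoidAlgebra.singleOneRingHom_apply,
    MonoidAlgebra.of_apply]
  show MonoidAlgebra.single (1 : Z2) (b : S) * MonoidAlgebra.single a 1 = _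
  rw [MonoidAlgebra.single_mul_single, one_mul, mul_one]

lemma mapC_apply (S : Type*) [CommRing S] (x : MonoidAlgebra ℤ Z2) (t : Z2) :
    (mapC S x).coeff t = ((x.coeff t : ℤ) : S) := by
  classical
  induction x using MonoidAlgebra.induction with
  | zero => simp
  | single_add a b f _ _ ih =>
    show (mapC S (MonoidAlgebra.single a b + (show MonoidAlgebra ℤ Z2 from f))).coeff t = _
    rw [map_add, mapC_single, MonoidAlgebra.coeff_add, MonoidAlgebra.coeff_add, Finsupp.add_apply, Finsupp.add_apply, ih]
    simp [MonoidAlgebra.coeff_single, Finsupp.single_apply, apply_ite (fun z : ℤ => (z : S))]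

end SchurAux

namespace SchurAux

open MonoidAlgebra

variable {F : Type*} [Field F] [CharZero F]

lemma pow_mem_span (A : SchurRing F Z2) {x : MonoidAlgebra F Z2} (hx : x ∈ A.span) :
    ∀ n : ℕ, 1 ≤ n → x ^ n ∈ A.span := by
  intro n hn
  induction n with
  | zero => omega
  | succ m ih =>
    rcases Nat.eq_or_lt_of_le hn with h1 | h1
    · rw [← h1, pow_one]; exact hx
    · rw [pow_succ]
      exact A.mul_mem _ (ih (by omega)) _ hx

/-- the integral simple quantity -/
noncomputable def sqZ (D : Finset Z2) : MonoidAlgebra ℤ Z2 :=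
  ∑ d ∈ D, MonoidAlgebra.single d (1 : ℤ)

lemma mapC_sqZ' (S : Type*) [CommRing S] (D : Finset Z2) :
    mapC S (sqZ D) = ∑ d ∈ D, MonoidAlgebra.single d (1 : S) := by
  rw [sqZ, map_sum]
  refine Finset.sum_congr rfl fun d _ => ?_
  rw [mapC_single, Int.cast_one]

lemma mapC_sqZ (D : Finset Z2) : mapC F (sqZ D) = simpleQuantity F D := by
  rw [mapC_sqZ', simpleQuantity]

lemma sq_pow_coeff (D : Finset Z2) (p : ℕ) (t : Z2) :
    ((simpleQuantity F D) ^ p).coeff t = (((sqZ D ^ p).coeff t : ℤ) : F) := by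
  rw [← mapC_sqZ, ← map_pow, mapC_apply]

lemma frob_coeff (D : Finset Z2) {p : ℕ} (hp : p.Prime) (t : Z2) :
    (((sqZ D ^ p).coeff t : ℤ) : ZMod p)
      = (((∑ d ∈ D, MonoidAlgebra.single (d ^ p) (1 : ℤ)).coeff t : ℤ) : ZMod p) := by
  haveI : Fact p.Prime := ⟨hp⟩
  haveI : CharP (MonoidAlgebra (ZMod p) Z2) p := by
    refine charP_of_injective_ringHom
      (f := (MonoidAlgebra.singleOneRingHom : ZMod p →+* MonoidAlgebra (ZMod p) Z2)) ?_ p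
    intro r s hrs
    have h1 : (MonoidAlgebra.single (1 : Z2) r).coeff (1 : Z2)
        = (MonoidAlgebra.single (1 : Z2) s).coeff (1 : Z2) := by
      exact congrArg (fun z => z.coeff (1 : Z2)) hrs
    simpa [MonoidAlgebra.coeff_single, Finsupp.single_eq_same] using h1
  have key : mapC (ZMod p) (sqZ D ^ p)
      = mapC (ZMod p) (∑ d ∈ D, MonoidAlgebra.single (d ^ p) (1 : ℤ)) := by
    rw [map_pow, mapC_sqZ', sum_pow_char, map_sum]
    refine Finset.sum_congr rfl fun d _ => ?_
    rw [MonoidAlgebra.single_pow, one_pow, mapC_single, Int.cast_one]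
  have h1 := congrArg (fun z : MonoidAlgebra (ZMod p) Z2 => z.coeff t) key
  rw [mapC_apply, mapC_apply] at h1
  exact h1

end SchurAux

namespace SchurAux

open MonoidAlgebra

variable {F : Type*} [Field F] [CharZero F]

lemma powset_coeff (D : Finset Z2) (p : ℕ) (t : Z2) :
    (∑ d ∈ D, MonoidAlgebra.single (d ^ p) (1 : ℤ)).coeff t
      = ∑ d ∈ D, (if d ^ p = t then (1 : ℤ) else 0) := by
  classical
  rw [MonoidAlgebra.coeff_sum, Finsupp.finset_sum_apply]
  refine Finset.sum_congr rfl fun d _ => ?_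
  simp [MonoidAlgebra.coeff_single, Finsupp.single_apply]

/-- Wielandt: the part of `g^p` is contained in the `p`-th power dilate of `D`. -/
lemma part_subset_powers (A : SchurRing F Z2) {D E : Finset Z2} (hD : D ∈ A.parts)
    (hE : E ∈ A.parts) {p : ℕ} (hp : p.Prime) {g : Z2} (hg : g ∈ D) (hgE : g ^ p ∈ E) :
    ∀ e ∈ E, ∃ d ∈ D, d ^ p = e := by
  classical
  intro e he
  haveI : Fact p.Prime := ⟨hp⟩
  -- the power of the simple quantity lies in the span
  have hxp : (simpleQuantity F D) ^ p ∈ A.span :=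
    pow_mem_span A (sq_mem_span A hD) p hp.one_lt.le
  have hco : ((simpleQuantity F D) ^ p).coeff e = ((simpleQuantity F D) ^ p).coeff (g ^ p) :=
    coeff_const A hxp hE he hgE
  rw [sq_pow_coeff, sq_pow_coeff] at hco
  have hcoZ : (sqZ D ^ p).coeff e = (sqZ D ^ p).coeff (g ^ p) := by exact_mod_cast hco
  -- coefficient of g^p in the dilate is 1
  have hygp : (∑ d ∈ D, MonoidAlgebra.single (d ^ p) (1 : ℤ)).coeff (g ^ p) = 1 := by
    rw [powset_coeff]
    rw [Finset.sum_congr rfl (fun d _ => ?_), Finset.sum_ite_eq' D g (fun _ => (1:ℤ))]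
    · rw [if_pos hg]
    · congr 1
      simp only [eq_iff_iff]
      constructor
      · exact fun hdg => pow_left_inj hp.ne_zero hdg
      · rintro rfl; rfl
  -- mod p computation
  have h1 : (((sqZ D ^ p).coeff (g ^ p) : ℤ) : ZMod p) = 1 := by
    rw [frob_coeff D hp, hygp]; norm_num
  have h2 : (((sqZ D ^ p).coeff e : ℤ) : ZMod p) = 1 := by rw [hcoZ, h1]
  rw [frob_coeff D hp] at h2
  have h3 : (∑ d ∈ D, MonoidAlgebra.single (d ^ p) (1 : ℤ)).coeff e ≠ 0 := by
    intro h0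
    rw [h0] at h2
    simp only [Int.cast_zero] at h2
    exact one_ne_zero h2.symm
  rw [powset_coeff] at h3
  obtain ⟨d, hd, hne⟩ := Finset.exists_ne_zero_of_sum_ne_zero h3
  refine ⟨d, hd, ?_⟩
  by_contra hcon
  rw [if_neg hcon] at hne
  exact hne rfl

end SchurAux

open SchurAux

/-- If `⟨a^k⟩` is an `A`-subgroup for some nonzero `k`, then `⟨a⟩` is an
`A`-subgroup. -/
theorem zpowers_isASet {F : Type*} [Field F] [CharZero F] (A : SchurRing F Z2)
    (k : ℤ) (hk : k ≠ 0) (h : A.IsASet ↑(Subgroup.zpowers (ga ^ k))) :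
    A.IsASet ↑(Subgroup.zpowers ga) := by
  classical
  rintro D hD ⟨g, hgD, hgL⟩
  have hgL' : g ∈ Subgroup.zpowers ga := hgL
  have hpi2g : pi2 g = 0 := mem_zpowers_ga_iff.mp hgL'
  -- choose a prime p ≡ 1 mod |k|
  have hκ0 : k.natAbs ≠ 0 := Int.natAbs_ne_zero.mpr hk
  obtain ⟨p, hp, hp1, hpmod⟩ := Nat.exists_prime_gt_modEq_one 1 hκ0
  have hp2 : 2 ≤ p := hp.two_le
  have hκdvd : (k.natAbs : ℤ) ∣ (p : ℤ) - 1 := by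
    have := (Nat.modEq_iff_dvd (n := k.natAbs)).mp hpmod.symm
    simpa using this
  have hkdvd : k ∣ (p : ℤ) - 1 := (Int.natAbs_dvd).mp hκdvd
  -- the element w = g ^ (p - 1) lies in ⟨ga ^ k⟩
  set w : Z2 := g ^ (p - 1) with hw
  have hcast : ((p - 1 : ℕ) : ℤ) = (p : ℤ) - 1 := by
    rw [Nat.cast_sub (by omega)]; norm_num
  have hwK : w ∈ Subgroup.zpowers (ga ^ k) := by
    rw [mem_zpowers_gak_iff]
    constructor
    · rw [hw, pi2_pow, hpi2g, mul_zero]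
    · have h1 : Multiplicative.toAdd w = (p - 1 : ℕ) • Multiplicative.toAdd g := by
        rw [hw, toAdd_pow]
      have h2 : (Multiplicative.toAdd w).1 = ((p - 1 : ℕ) : ℤ) * (Multiplicative.toAdd g).1 := by
        rw [h1]; rfl
      rw [h2, hcast]
      exact Dvd.dvd.mul_right hkdvd _
  -- its part lies inside ⟨ga ^ k⟩, as does the inverse part
  obtain ⟨W, hW, hwW⟩ := A.cover w
  have hWK : (W : Set Z2) ⊆ ↑(Subgroup.zpowers (ga ^ k)) := h W hW ⟨w, hwW, hwK⟩
  obtain ⟨W', hW', hWiff⟩ := A.inv_mem W hW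
  have hwinvW' : w⁻¹ ∈ W' := by
    rw [hWiff, inv_inv]; exact hwW
  have hW'pi2 : ∀ b ∈ W', pi2 b = 0 := by
    intro b hb
    have hbK : b⁻¹ ∈ Subgroup.zpowers (ga ^ k) := hWK ((hWiff b).mp hb)
    have h0 : pi2 b⁻¹ = 0 := (mem_zpowers_gak_iff.mp hbK).1
    have : pi2 (b * b⁻¹) = pi2 b + pi2 b⁻¹ := pi2_mul b b⁻¹
    rw [mul_inv_cancel] at this
    have h1 : pi2 (1 : Z2) = 0 := rfl
    omega
  -- the part of g ^ p
  obtain ⟨E, hE, hgpE⟩ := A.cover (g ^ p)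
  have hpows : ∀ e ∈ E, ∃ d ∈ D, d ^ p = e :=
    part_subset_powers A hD hE hp hgD hgpE
  -- D ⊆ E * W'
  have hfact : g ^ p * w⁻¹ = g := by
    have hps : g ^ p = w * g := by
      rw [hw, ← pow_succ]
      congr 1
      omega
    rw [hps, mul_comm w g, mul_inv_cancel_right]
  have hBsub : ∀ d ∈ D, ∃ a ∈ E, ∃ b ∈ W', a * b = d :=
    part_subset_mul A hE hW' hD hgpE hwinvW' (by rw [hfact]; exact hgD)
  -- key dilation property
  have hkey : ∀ d ∈ D, ∃ d' ∈ D, pi2 d = (p : ℤ) * pi2 d' := by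
    intro d hd
    obtain ⟨a, ha, b, hb, hab⟩ := hBsub d hd
    obtain ⟨d', hd', hd'a⟩ := hpows a ha
    refine ⟨d', hd', ?_⟩
    rw [← hab, pi2_mul, hW'pi2 b hb, add_zero, ← hd'a, pi2_pow]
  -- descent
  have hdesc : ∀ n : ℕ, ∀ d ∈ D, (pi2 d).natAbs ≤ n → pi2 d = 0 := by
    intro n
    induction n with
    | zero =>
      intro d hd hle
      have := Nat.le_zero.mp hle
      exact Int.natAbs_eq_zero.mp this
    | succ m ih =>
      intro d hd hle
      obtain ⟨d', hd', heq⟩ := hkey d hd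
      by_cases h0 : pi2 d' = 0
      · rw [heq, h0, mul_zero]
      · exfalso
        have hmul : (pi2 d).natAbs = p * (pi2 d').natAbs := by
          rw [heq, Int.natAbs_mul, Int.natAbs_natCast]
        have h1 : 1 ≤ (pi2 d').natAbs := by
          rcases Nat.eq_zero_or_pos (pi2 d').natAbs with h2 | h2
          · exact absurd (Int.natAbs_eq_zero.mp h2) h0
          · exact h2
        have h2 : (pi2 d').natAbs ≤ m := by nlinarith
        exact h0 (ih d' hd' h2)
  intro x hx
  have hx' : x ∈ D := hx
  have : pi2 x = 0 := hdesc (pi2 x).natAbs x hx' le_rfl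
  exact mem_zpowers_ga_iff.mpr this
end
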